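/- arXiv:2004.02027 — 3 statements merged into one kernel-verified Lean document; each statement's English description precedes it below -/
import Mathlib

section
/- Let k_h(x,y) be defined on ℝ²×ℝ² by k_h(x,y) = 0 if |x−y| < |h| and k_h(x,y) = 1/√(|x−y|² − h²) if |x−y| ≥ |h|. Then for every h ∈ ℝ, ∫_{|y| ≤ 2} |k_0(0,y) − k_h(0,y)| dy ≤ 4π |h|. -/
open MeasureTheory Real Set Filter

noncomputable section

/-- The unit direction vector `θ(φ) = (cos φ, sin φ)`. -/
def dirv (φ : ℝ) : ℝ × ℝ := (Real.cos φ, Real.sin φ)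

/-- The perpendicular direction `θ(φ)^⊥ = (−sin φ, cos φ)`. -/
def dirp (φ : ℝ) : ℝ × ℝ := (-Real.sin φ, Real.cos φ)

/-- Euclidean inner product on `ℝ²`. -/
def dot2 (x y : ℝ × ℝ) : ℝ := x.1 * y.1 + x.2 * y.2

/-- The open unit disk `Ω = B(0,1) ⊂ ℝ²`. -/
def unitDisk : Set (ℝ × ℝ) := {x : ℝ × ℝ | x.1 ^ 2 + x.2 ^ 2 < 1}

/-- The Radon transform `[R f](s,φ) = ∫ f(s θ(φ) + t θ(φ)^⊥) dt`. -/
def Radon (f : ℝ × ℝ → ℝ) (s φ : ℝ) : ℝ := ∫ t : ℝ, f (s • dirv φ + t • dirp φ)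

/-- The backprojection `[R* g](x) = ∫_{S¹} g(x·θ(φ), φ) dφ`. -/
def Backproj (g : ℝ → ℝ → ℝ) (x : ℝ × ℝ) : ℝ := ∫ φ in Ioc (-π) π, g (dot2 x (dirv φ)) φ

/-- `L²` norm of an image on the plane (for images supported in the unit disk,
this is the `L²(Ω)` norm). -/
def nImg (f : ℝ × ℝ → ℝ) : ℝ := (∫ x : ℝ × ℝ, f x ^ 2) ^ (1/2 : ℝ)

/-- `L²(Ω)` norm of an image restricted to the unit disk. -/
def nImgD (f : ℝ × ℝ → ℝ) : ℝ := (∫ x in unitDisk, f x ^ 2) ^ (1/2 : ℝ)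

/-- `L²(ℝ × S¹)` norm of a sinogram. -/
def nSino (g : ℝ → ℝ → ℝ) : ℝ := (∫ φ in Ioc (-π) π, ∫ s : ℝ, g s φ ^ 2) ^ (1/2 : ℝ)

/-- `L²(Ω')` norm, `Ω' = (−1,1) × S¹`. -/
def nSinoD (g : ℝ → ℝ → ℝ) : ℝ :=
  (∫ φ in Ioc (-π) π, ∫ s in Ioo (-1 : ℝ) 1, g s φ ^ 2) ^ (1/2 : ℝ)

/-- `L²` modulus of continuity of a sinogram: offset shift `h`, angular shift `γ`. -/
def modCont (g : ℝ → ℝ → ℝ) (h γ : ℝ) : ℝ :=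
  (∫ φ in Ioc (-π) π, ∫ s : ℝ, (g (s + h) (φ + γ) - g s φ) ^ 2) ^ (1/2 : ℝ)

/-- `sup_{|h| < r} ω_g(h, 0)`. -/
def supMod (g : ℝ → ℝ → ℝ) (r : ℝ) : ℝ :=
  sSup ((fun h => modCont g h 0) '' Ioo (-r) r)

/-- `f` vanishes outside the unit disk. -/
def SuppDisk (f : ℝ × ℝ → ℝ) : Prop := ∀ x, x ∉ unitDisk → f x = 0

/-- `g` vanishes for offsets outside `(−1, 1)`. -/
def SuppSino (g : ℝ → ℝ → ℝ) : Prop := ∀ s φ, s ∉ Ioo (-1 : ℝ) 1 → g s φ = 0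

/-- `g` is `2π`-periodic in the angular variable, i.e. a function on `ℝ × S¹`. -/
def PeriodicSino (g : ℝ → ℝ → ℝ) : Prop := ∀ s φ, g s (φ + 2 * π) = g s φ

/-- `f ∈ L²(ℝ²)`. -/
def L2Img (f : ℝ × ℝ → ℝ) : Prop := MemLp f 2 (volume : Measure (ℝ × ℝ))

/-- `g ∈ L²(ℝ × S¹)`. -/
def L2Sino (g : ℝ → ℝ → ℝ) : Prop :=
  MemLp (fun z : ℝ × ℝ => g z.1 z.2) 2
    ((volume : Measure (ℝ × ℝ)).restrict (univ ×ˢ Ioc (-π) π))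

/-- The hat profile `w_δ(t) = max(0, δ − |t|)`. -/
def hatw (δ t : ℝ) : ℝ := max 0 (δ - |t|)

/-- Detector centers `s_p = δ_s (p − (P+1)/2)`. -/
def sCen (δs : ℝ) (P p : ℕ) : ℝ := δs * ((p : ℝ) - ((P : ℝ) + 1) / 2)

/-- Detector cells `S_p = s_p + [−δ_s/2, δ_s/2)`. -/
def sCell (δs : ℝ) (P p : ℕ) : Set ℝ := Ico (sCen δs P p - δs / 2) (sCen δs P p + δs / 2)

/-- The detector cells cover `(−1, 1)`. -/
def CoversI (δs : ℝ) (P : ℕ) : Prop := Ioo (-1 : ℝ) 1 ⊆ ⋃ p ∈ Finset.Icc 1 P, sCell δs P p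

/-- Offset-discretized Radon transform `R_{δ_s}`. -/
def RadonS (δs : ℝ) (P : ℕ) (f : ℝ × ℝ → ℝ) (s φ : ℝ) : ℝ :=
  (δs ^ 2)⁻¹ * ∑ p ∈ Finset.Icc 1 P,
    Set.indicator (sCell δs P p) (fun _ => (1 : ℝ)) s *
      ∫ t : ℝ, hatw δs (t - sCen δs P p) * Radon f t φ

/-- The adjoint of `R_{δ_s}`. -/
def RadonSStar (δs : ℝ) (P : ℕ) (g : ℝ → ℝ → ℝ) (x : ℝ × ℝ) : ℝ :=
  (δs ^ 2)⁻¹ * ∑ p ∈ Finset.Icc 1 P,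
    ∫ φ in Ioc (-π) π,
      hatw δs (dot2 x (dirv φ) - sCen δs P p) * ∫ s in sCell δs P p, g s φ

/-- A valid full angular grid `φ_1 < … < φ_Q` in `[−π, π)` with the wrap-around
conventions `φ_0 = φ_Q − 2π` and `φ_{Q+1} = φ_1 + 2π`. -/
structure AngGrid (Q : ℕ) (φs : ℕ → ℝ) : Prop where
  one_le : 1 ≤ Q
  mono : ∀ q, 1 ≤ q → q < Q → φs q < φs (q + 1)
  mem : ∀ q, 1 ≤ q → q ≤ Q → φs q ∈ Ico (-π) π
  wrap0 : φs 0 = φs Q - 2 * π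
  wrapQ : φs (Q + 1) = φs 1 + 2 * π

/-- `δφ` bounds all angular gaps of the grid (it holds for `δφ` the maximal gap). -/
def GapLe (Q : ℕ) (φs : ℕ → ℝ) (δφ : ℝ) : Prop :=
  ∀ q, 1 ≤ q → q ≤ Q → φs (q + 1) - φs q ≤ δφ

/-- The angular cell `Θ_q`, taken modulo `2π`. -/
def angCell (φs : ℕ → ℝ) (q : ℕ) : Set ℝ :=
  {φ : ℝ | ∃ k : ℤ, φ + 2 * π * (k : ℝ) ∈
    Ico ((φs (q - 1) + φs q) / 2) ((φs q + φs (q + 1)) / 2)}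

/-- Offset- and angle-discretized Radon transform `R_{δ_s, δ_φ}`. -/
def RadonSA (δs : ℝ) (P Q : ℕ) (φs : ℕ → ℝ) (f : ℝ × ℝ → ℝ) (s φ : ℝ) : ℝ :=
  (δs ^ 2)⁻¹ * ∑ q ∈ Finset.Icc 1 Q, ∑ p ∈ Finset.Icc 1 P,
    Set.indicator (sCell δs P p) (fun _ => (1 : ℝ)) s *
    Set.indicator (angCell φs q) (fun _ => (1 : ℝ)) φ *
    ∫ x in unitDisk, hatw δs (dot2 x (dirv (φs q)) - sCen δs P p) * f x

/-- Pixel centers `x_{ij}`. -/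
def pixCen (δx : ℝ) (N M i j : ℕ) : ℝ × ℝ :=
  (δx * ((i : ℝ) - ((N : ℝ) + 1) / 2), δx * ((j : ℝ) - ((M : ℝ) + 1) / 2))

/-- Pixels `X_{ij} = x_{ij} + [−δ_x/2, δ_x/2)²`. -/
def pixCell (δx : ℝ) (N M i j : ℕ) : Set (ℝ × ℝ) :=
  Ico ((pixCen δx N M i j).1 - δx / 2) ((pixCen δx N M i j).1 + δx / 2) ×ˢ
    Ico ((pixCen δx N M i j).2 - δx / 2) ((pixCen δx N M i j).2 + δx / 2)

/-- The pixels cover the unit disk. -/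
def CoversDisk (δx : ℝ) (N M : ℕ) : Prop :=
  unitDisk ⊆ ⋃ i ∈ Finset.Icc 1 N, ⋃ j ∈ Finset.Icc 1 M, pixCell δx N M i j

/-- The fully discrete (pixel-driven) Radon transform `R^{δ_x}_{δ_s, δ_φ}`. -/
def RadonFull (δs : ℝ) (P Q : ℕ) (φs : ℕ → ℝ) (δx : ℝ) (N M : ℕ)
    (f : ℝ × ℝ → ℝ) (s φ : ℝ) : ℝ :=
  (δs ^ 2)⁻¹ * ∑ q ∈ Finset.Icc 1 Q, ∑ p ∈ Finset.Icc 1 P,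
    Set.indicator (sCell δs P p) (fun _ => (1 : ℝ)) s *
    Set.indicator (angCell φs q) (fun _ => (1 : ℝ)) φ *
    ∑ i ∈ Finset.Icc 1 N, ∑ j ∈ Finset.Icc 1 M,
      hatw δs (dot2 (pixCen δx N M i j) (dirv (φs q)) - sCen δs P p) *
        ∫ x in pixCell δx N M i j, f x

/-- The adjoint of the fully discrete Radon transform (pixel-driven backprojection). -/
def RadonFullStar (δs : ℝ) (P Q : ℕ) (φs : ℕ → ℝ) (δx : ℝ) (N M : ℕ)
    (g : ℝ → ℝ → ℝ) (x : ℝ × ℝ) : ℝ :=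
  ∑ i ∈ Finset.Icc 1 N, ∑ j ∈ Finset.Icc 1 M,
    Set.indicator (pixCell δx N M i j) (fun _ => (1 : ℝ)) x *
    ((δs ^ 2)⁻¹ * ∑ q ∈ Finset.Icc 1 Q, ∑ p ∈ Finset.Icc 1 P,
      hatw δs (dot2 (pixCen δx N M i j) (dirv (φs q)) - sCen δs P p) *
        ∫ φ in Ico ((φs (q - 1) + φs q) / 2) ((φs q + φs (q + 1)) / 2),
          ∫ s in sCell δs P p, g s φ)

/- ---------- sparse / limited angle ---------- -/

/-- Limited-angle angular grid on `A = (φ_1, φ_Q)` with `φ_0 = φ_1`, `φ_{Q+1} = φ_Q`. -/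
structure AngGridA (Q : ℕ) (φs : ℕ → ℝ) : Prop where
  two_le : 2 ≤ Q
  mono : ∀ q, 1 ≤ q → q < Q → φs q < φs (q + 1)
  mem : ∀ q, 1 ≤ q → q ≤ Q → φs q ∈ Ico (-π) π
  wrap0 : φs 0 = φs 1
  wrapQ : φs (Q + 1) = φs Q

/-- `L²(Ω'_A)` norm, `Ω'_A = (−1,1) × A` with `A = (a,b)`. -/
def nSinoA (a b : ℝ) (g : ℝ → ℝ → ℝ) : ℝ :=
  (∫ φ in Ioo a b, ∫ s in Ioo (-1 : ℝ) 1, g s φ ^ 2) ^ (1/2 : ℝ)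

/-- Limited-angle backprojection `(R^A)*`. -/
def BackprojA (a b : ℝ) (g : ℝ → ℝ → ℝ) (x : ℝ × ℝ) : ℝ :=
  ∫ φ in Ioo a b, g (dot2 x (dirv φ)) φ

/-- `g ∈ L²((−1,1) × A)` (as a function on `ℝ × A`). -/
def L2SinoA (a b : ℝ) (g : ℝ → ℝ → ℝ) : Prop :=
  MemLp (fun z : ℝ × ℝ => g z.1 z.2) 2
    ((volume : Measure (ℝ × ℝ)).restrict (univ ×ˢ Ioo a b))

/-- limited-angle modulus of continuity `ω_g(h, 0)` on `ℝ × A`. -/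
def modContA (a b : ℝ) (g : ℝ → ℝ → ℝ) (h : ℝ) : ℝ :=
  (∫ φ in Ioo a b, ∫ s : ℝ, (g (s + h) φ - g s φ) ^ 2) ^ (1/2 : ℝ)

/-- Sparse-angle `L²(Ω'_F)` norm (counting measure in the angular direction). -/
def nSinoF (Q : ℕ) (φs : ℕ → ℝ) (g : ℝ → ℝ → ℝ) : ℝ :=
  (∑ q ∈ Finset.Icc 1 Q, ∫ s in Ioo (-1 : ℝ) 1, g s (φs q) ^ 2) ^ (1/2 : ℝ)

/-- Sparse-angle modulus of continuity `ω_g(h, 0)`. -/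
def modContF (Q : ℕ) (φs : ℕ → ℝ) (g : ℝ → ℝ → ℝ) (h : ℝ) : ℝ :=
  (∑ q ∈ Finset.Icc 1 Q, ∫ s : ℝ, (g (s + h) (φs q) - g s (φs q)) ^ 2) ^ (1/2 : ℝ)

/-- Sparse-angle backprojection `(R^F)* g (x) = Σ_q g(x·θ_q, φ_q)`. -/
def BackprojF (Q : ℕ) (φs : ℕ → ℝ) (g : ℝ → ℝ → ℝ) (x : ℝ × ℝ) : ℝ :=
  ∑ q ∈ Finset.Icc 1 Q, g (dot2 x (dirv (φs q))) (φs q)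

/-- The discrete sparse-angle Radon transform at a single angle `θang`. -/
def RadonSparse (δs : ℝ) (P : ℕ) (δx : ℝ) (N M : ℕ) (θang : ℝ)
    (f : ℝ × ℝ → ℝ) (s : ℝ) : ℝ :=
  (δs ^ 2)⁻¹ * ∑ p ∈ Finset.Icc 1 P,
    Set.indicator (sCell δs P p) (fun _ => (1 : ℝ)) s *
    ∑ i ∈ Finset.Icc 1 N, ∑ j ∈ Finset.Icc 1 M,
      hatw δs (dot2 (pixCen δx N M i j) (dirv θang) - sCen δs P p) *
        ∫ x in pixCell δx N M i j, f x

/-- Adjoint of the discrete sparse-angle Radon transform. -/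
def RadonSparseStar (δs : ℝ) (P : ℕ) (δx : ℝ) (N M Q : ℕ) (φs : ℕ → ℝ)
    (g : ℝ → ℝ → ℝ) (x : ℝ × ℝ) : ℝ :=
  ∑ i ∈ Finset.Icc 1 N, ∑ j ∈ Finset.Icc 1 M,
    Set.indicator (pixCell δx N M i j) (fun _ => (1 : ℝ)) x *
    ((δs ^ 2)⁻¹ * ∑ q ∈ Finset.Icc 1 Q, ∑ p ∈ Finset.Icc 1 P,
      hatw δs (dot2 (pixCen δx N M i j) (dirv (φs q)) - sCen δs P p) *
        ∫ s in sCell δs P p, g s (φs q))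

/- ---------- fanbeam ---------- -/

/-- Detector width `W = 2R/√(R_E² − 1)`. -/
def Wfan (RE R : ℝ) : ℝ := 2 * R / Real.sqrt (RE ^ 2 - 1)

/-- The fanbeam transform `F`. -/
def Fanbeam (RE R : ℝ) (f : ℝ × ℝ → ℝ) (ξ α : ℝ) : ℝ :=
  Real.sqrt (ξ ^ 2 + R ^ 2) *
    ∫ t : ℝ, f (t • (ξ • dirv α + R • dirp α) - RE • dirp α)

/-- The unweighted fanbeam transform `G`. -/
def GFan (RE R : ℝ) (f : ℝ × ℝ → ℝ) (ξ α : ℝ) : ℝ :=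
  ∫ t : ℝ, f (t • (ξ • dirv α + R • dirp α) - RE • dirp α)

/-- Fan projection coordinate `ξ(x, α) = x·θ(α) R / (x·θ(α)^⊥ + R_E)`. -/
def fanProj (RE R : ℝ) (x : ℝ × ℝ) (α : ℝ) : ℝ :=
  dot2 x (dirv α) * R / (dot2 x (dirp α) + RE)

/-- Adjoint `G*` of the unweighted fanbeam transform. -/
def GFanStar (RE R : ℝ) (g : ℝ → ℝ → ℝ) (x : ℝ × ℝ) : ℝ :=
  ∫ α in Ioc (-π) π, (dot2 x (dirp α) + RE)⁻¹ * g (fanProj RE R x α) α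

/-- Adjoint `F*` of the fanbeam transform. -/
def FanbeamStar (RE R : ℝ) (g : ℝ → ℝ → ℝ) (x : ℝ × ℝ) : ℝ :=
  ∫ α in Ioc (-π) π,
    Real.sqrt (fanProj RE R x α ^ 2 + R ^ 2) * (dot2 x (dirp α) + RE)⁻¹ *
      g (fanProj RE R x α) α

/-- `L²(Ω')` norm for the fanbeam geometry, `Ω' = (−W/2, W/2) × S¹`. -/
def nSinoW (RE R : ℝ) (g : ℝ → ℝ → ℝ) : ℝ :=
  (∫ α in Ioc (-π) π, ∫ ξ in Ioo (-(Wfan RE R) / 2) (Wfan RE R / 2), g ξ α ^ 2) ^ (1/2 : ℝ)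

/-- `g` vanishes for offsets outside `(−W/2, W/2)`. -/
def SuppSinoW (RE R : ℝ) (g : ℝ → ℝ → ℝ) : Prop :=
  ∀ ξ α, ξ ∉ Ioo (-(Wfan RE R) / 2) (Wfan RE R / 2) → g ξ α = 0

/-- `g ∈ L²((−W/2, W/2) × S¹)`. -/
def L2SinoW (RE R : ℝ) (g : ℝ → ℝ → ℝ) : Prop :=
  MemLp (fun z : ℝ × ℝ => g z.1 z.2) 2
    ((volume : Measure (ℝ × ℝ)).restrict
      (Ioo (-(Wfan RE R) / 2) (Wfan RE R / 2) ×ˢ Ioc (-π) π))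

/-- Offset-discretized unweighted fanbeam transform `G_{δ_ξ}`, `δ_ξ = W/P`. -/
def GFanS (RE R : ℝ) (P : ℕ) (f : ℝ × ℝ → ℝ) (ξ α : ℝ) : ℝ :=
  ((Wfan RE R / P) ^ 2)⁻¹ * ∑ p ∈ Finset.Icc 1 P,
    Set.indicator (sCell (Wfan RE R / P) P p) (fun _ => (1 : ℝ)) ξ *
      ∫ x in unitDisk,
        hatw (Wfan RE R / P) (fanProj RE R x α - sCen (Wfan RE R / P) P p) *
          f x / (dot2 x (dirp α) + RE)

/-- Adjoint of `G_{δ_ξ}`. -/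
def GFanSStar (RE R : ℝ) (P : ℕ) (g : ℝ → ℝ → ℝ) (x : ℝ × ℝ) : ℝ :=
  ((Wfan RE R / P) ^ 2)⁻¹ * ∑ p ∈ Finset.Icc 1 P,
    ∫ α in Ioc (-π) π,
      hatw (Wfan RE R / P) (fanProj RE R x α - sCen (Wfan RE R / P) P p) *
        (dot2 x (dirp α) + RE)⁻¹ *
        ∫ ξ in sCell (Wfan RE R / P) P p, g ξ α

/-- Offset- and angle-discretized `G_{δ_ξ, δ_α}`. -/
def GFanSA (RE R : ℝ) (P Q : ℕ) (αs : ℕ → ℝ) (f : ℝ × ℝ → ℝ) (ξ α : ℝ) : ℝ :=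
  ((Wfan RE R / P) ^ 2)⁻¹ * ∑ p ∈ Finset.Icc 1 P, ∑ q ∈ Finset.Icc 1 Q,
    Set.indicator (sCell (Wfan RE R / P) P p) (fun _ => (1 : ℝ)) ξ *
    Set.indicator (angCell αs q) (fun _ => (1 : ℝ)) α *
      ∫ x in unitDisk,
        hatw (Wfan RE R / P) (fanProj RE R x (αs q) - sCen (Wfan RE R / P) P p) *
          f x / (dot2 x (dirp (αs q)) + RE)

/-- Fully discrete unweighted fanbeam transform `G^{δ_x}_{δ_ξ, δ_α}`. -/
def GFanFull (RE R : ℝ) (P Q : ℕ) (αs : ℕ → ℝ) (δx : ℝ) (N M : ℕ)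
    (f : ℝ × ℝ → ℝ) (ξ α : ℝ) : ℝ :=
  ((Wfan RE R / P) ^ 2)⁻¹ * ∑ p ∈ Finset.Icc 1 P, ∑ q ∈ Finset.Icc 1 Q,
    Set.indicator (sCell (Wfan RE R / P) P p) (fun _ => (1 : ℝ)) ξ *
    Set.indicator (angCell αs q) (fun _ => (1 : ℝ)) α *
    ∑ i ∈ Finset.Icc 1 N, ∑ j ∈ Finset.Icc 1 M,
      hatw (Wfan RE R / P)
          (fanProj RE R (pixCen δx N M i j) (αs q) - sCen (Wfan RE R / P) P p) *
        (dot2 (pixCen δx N M i j) (dirp (αs q)) + RE)⁻¹ *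
        ∫ x in pixCell δx N M i j, f x

/-- Fully discrete pixel-driven fanbeam transform `F^{δ_x}_{δ_ξ, δ_α}`. -/
def FanFull (RE R : ℝ) (P Q : ℕ) (αs : ℕ → ℝ) (δx : ℝ) (N M : ℕ)
    (f : ℝ × ℝ → ℝ) (ξ α : ℝ) : ℝ :=
  ((Wfan RE R / P) ^ 2)⁻¹ * ∑ p ∈ Finset.Icc 1 P, ∑ q ∈ Finset.Icc 1 Q,
    Set.indicator (sCell (Wfan RE R / P) P p) (fun _ => (1 : ℝ)) ξ *
    Set.indicator (angCell αs q) (fun _ => (1 : ℝ)) α *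
    Real.sqrt (sCen (Wfan RE R / P) P p ^ 2 + R ^ 2) *
    ∑ i ∈ Finset.Icc 1 N, ∑ j ∈ Finset.Icc 1 M,
      hatw (Wfan RE R / P)
          (fanProj RE R (pixCen δx N M i j) (αs q) - sCen (Wfan RE R / P) P p) *
        (dot2 (pixCen δx N M i j) (dirp (αs q)) + RE)⁻¹ *
        ∫ x in pixCell δx N M i j, f x

/-- Adjoint of the fully discrete pixel-driven fanbeam transform. -/
def FanFullStar (RE R : ℝ) (P Q : ℕ) (αs : ℕ → ℝ) (δx : ℝ) (N M : ℕ)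
    (g : ℝ → ℝ → ℝ) (x : ℝ × ℝ) : ℝ :=
  ∑ i ∈ Finset.Icc 1 N, ∑ j ∈ Finset.Icc 1 M,
    Set.indicator (pixCell δx N M i j) (fun _ => (1 : ℝ)) x *
    (((Wfan RE R / P) ^ 2)⁻¹ * ∑ q ∈ Finset.Icc 1 Q, ∑ p ∈ Finset.Icc 1 P,
      hatw (Wfan RE R / P)
          (fanProj RE R (pixCen δx N M i j) (αs q) - sCen (Wfan RE R / P) P p) *
        Real.sqrt (sCen (Wfan RE R / P) P p ^ 2 + R ^ 2) *
        (dot2 (pixCen δx N M i j) (dirp (αs q)) + RE)⁻¹ *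
        ∫ α in Ico ((αs (q - 1) + αs q) / 2) ((αs q + αs (q + 1)) / 2),
          ∫ ξ in sCell (Wfan RE R / P) P p, g ξ α)


/-- The kernel `k_h(x,y)`: `0` if `|x − y| < |h|`, else `1/√(|x − y|² − h²)`. -/
def kfun (h : ℝ) (x y : ℝ × ℝ) : ℝ :=
  if Real.sqrt ((x.1 - y.1) ^ 2 + (x.2 - y.2) ^ 2) < |h| then 0
  else 1 / Real.sqrt ((x.1 - y.1) ^ 2 + (x.2 - y.2) ^ 2 - h ^ 2)

/-! ### Auxiliary lemmas for the kernel estimate -/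

theorem my_lintegral_comp_polarCoord_symm (f : ℝ × ℝ → ENNReal) :
    (∫⁻ p in polarCoord.target, ENNReal.ofReal p.1 * f (polarCoord.symm p)) = ∫⁻ p, f p := by
  set B : ℝ × ℝ → ℝ × ℝ →L[ℝ] ℝ × ℝ := fun p =>
    LinearMap.toContinuousLinearMap (Matrix.toLin (Module.Basis.finTwoProd ℝ) (Module.Basis.finTwoProd ℝ)
      !![Real.cos p.2, -p.1 * Real.sin p.2; Real.sin p.2, p.1 * Real.cos p.2])
  have A : ∀ p ∈ polarCoord.target,
      HasFDerivWithinAt polarCoord.symm (B p) polarCoord.target p :=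
    fun p _ => (hasFDerivAt_polarCoord_symm p).hasFDerivWithinAt
  have B_det : ∀ p : ℝ × ℝ, (B p).det = p.1 := by
    intro p
    conv_rhs => rw [← one_mul p.1, ← Real.cos_sq_add_sin_sq p.2]
    simp only [B, neg_mul, LinearMap.det_toContinuousLinearMap, LinearMap.det_toLin,
      Matrix.det_fin_two_of, sub_neg_eq_add]
    ring
  symm
  calc
    ∫⁻ p, f p = ∫⁻ p in polarCoord.source, f p := by
      rw [← setLIntegral_univ]
      exact (setLIntegral_congr polarCoord_source_ae_eq_univ).symm
    _ = ∫⁻ p in polarCoord.symm '' polarCoord.target, f p := by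
      rw [polarCoord.symm_image_target_eq_source]
    _ = ∫⁻ p in polarCoord.target, ENNReal.ofReal |(B p).det| * f (polarCoord.symm p) :=
      lintegral_image_eq_lintegral_abs_det_fderiv_mul volume
        polarCoord.open_target.measurableSet A polarCoord.symm.injOn f
    _ = ∫⁻ p in polarCoord.target, ENNReal.ofReal p.1 * f (polarCoord.symm p) := by
      refine setLIntegral_congr_fun polarCoord.open_target.measurableSet
        (fun p hp => ?_)
      rw [B_det, abs_of_pos hp.1]

theorem oneD_estimate {a : ℝ} (ha : 0 < a) :
    (∫⁻ r in Ioi (0 : ℝ), ENNReal.ofReal r *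
        (if r ≤ 2 then
          ENNReal.ofReal |1 / r - (if r < a then 0 else 1 / Real.sqrt (r ^ 2 - a ^ 2))| else 0))
      ≤ ENNReal.ofReal (2 * a) := by
  set F : ℝ → ENNReal := fun r => ENNReal.ofReal r *
      (if r ≤ 2 then
        ENNReal.ofReal |1 / r - (if r < a then 0 else 1 / Real.sqrt (r ^ 2 - a ^ 2))| else 0)
    with hF
  set m := min a 2 with hm
  have hm0 : 0 < m := lt_min ha two_pos
  have hm2 : m ≤ 2 := min_le_right _ _
  have hma : m ≤ a := min_le_left _ _
  have hsplit : Ioi (0 : ℝ) = Ioc 0 m ∪ (Ioc m 2 ∪ Ioi 2) := by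
    rw [Ioc_union_Ioi_eq_Ioi hm2, Ioc_union_Ioi_eq_Ioi hm0.le]
  rw [hsplit, lintegral_union (measurableSet_Ioc.union measurableSet_Ioi)
      (by
        rw [Set.disjoint_left]
        rintro x hx (hx' | hx')
        · exact absurd hx.2 (not_le.2 hx'.1)
        · exact absurd (hx.2.trans hm2) (not_le.2 hx')),
    lintegral_union measurableSet_Ioi (Set.Ioc_disjoint_Ioi le_rfl)]
  have piece1 : (∫⁻ r in Ioc (0 : ℝ) m, F r) = ENNReal.ofReal m := by
    have h1 : ∀ r ∈ Ioc (0 : ℝ) m, F r = 1 := by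
      intro r hr
      have hr0 : (0 : ℝ) < r := hr.1
      have h2 : r ≤ 2 := hr.2.trans hm2
      have hinner : (if r < a then (0:ℝ) else 1 / Real.sqrt (r ^ 2 - a ^ 2)) = 0 := by
        rcases lt_or_ge r a with hra | hra
        · rw [if_pos hra]
        · have hra' : r = a := le_antisymm (hr.2.trans hma) hra
          rw [if_neg (not_lt.2 hra), hra', sub_self, Real.sqrt_zero, div_zero]
      simp only [hF, if_pos h2, hinner, sub_zero, abs_of_nonneg (by positivity : (0:ℝ) ≤ 1 / r)]
      rw [← ENNReal.ofReal_mul hr0.le, mul_one_div, div_self hr0.ne', ENNReal.ofReal_one]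
    rw [setLIntegral_congr_fun measurableSet_Ioc h1,
      setLIntegral_one, Real.volume_Ioc, sub_zero]
  have piece3 : (∫⁻ r in Ioi (2 : ℝ), F r) = 0 := by
    have h3 : ∀ r ∈ Ioi (2 : ℝ), F r = 0 := by
      intro r hr
      simp only [hF, if_neg (not_le.2 (mem_Ioi.1 hr)), mul_zero]
    rw [setLIntegral_congr_fun measurableSet_Ioi h3, lintegral_zero]
  have piece2 : (∫⁻ r in Ioc m 2, F r) ≤ ENNReal.ofReal a := by
    rcases lt_or_ge 2 a with ha2 | ha2
    · have : m = 2 := min_eq_right ha2.le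
      rw [this, Set.Ioc_self, Measure.restrict_empty, lintegral_zero_measure]
      exact zero_le
    · have hma' : m = a := min_eq_left ha2
      set φ : ℝ → ℝ := fun r => r / Real.sqrt (r ^ 2 - a ^ 2) - 1 with hφ
      set Fa : ℝ → ℝ := fun r => Real.sqrt (r ^ 2 - a ^ 2) - r with hFa
      have hd : ∀ r ∈ Ioo a 2, HasDerivAt Fa (φ r) r := by
        intro r hr
        have h1 : 0 < r ^ 2 - a ^ 2 := by nlinarith [hr.1, ha]
        have hs : 0 < Real.sqrt (r ^ 2 - a ^ 2) := Real.sqrt_pos.2 h1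
        have d1 : HasDerivAt (fun x : ℝ => x ^ 2 - a ^ 2) (2 * r) r := by
          simpa using (hasDerivAt_pow 2 r).sub_const (a ^ 2)
        have d2 : HasDerivAt (fun x : ℝ => Real.sqrt (x ^ 2 - a ^ 2))
            (1 / (2 * Real.sqrt (r ^ 2 - a ^ 2)) * (2 * r)) r :=
          (Real.hasDerivAt_sqrt h1.ne').comp r d1
        have d3 : HasDerivAt Fa (1 / (2 * Real.sqrt (r ^ 2 - a ^ 2)) * (2 * r) - 1) r :=
          d2.sub (hasDerivAt_id r)
        convert d3 using 1
        simp only [hφ]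
        field_simp
      have hφpos : ∀ r, a < r → 0 ≤ φ r := by
        intro r hr
        have h1 : 0 < r ^ 2 - a ^ 2 := by nlinarith [ha]
        have hs : 0 < Real.sqrt (r ^ 2 - a ^ 2) := Real.sqrt_pos.2 h1
        have hr0 : 0 < r := ha.trans hr
        have hsr : Real.sqrt (r ^ 2 - a ^ 2) ≤ r := by
          have h' := Real.sqrt_le_sqrt (show r ^ 2 - a ^ 2 ≤ r ^ 2 by nlinarith)
          rwa [Real.sqrt_sq hr0.le] at h'
        simp only [hφ, sub_nonneg]
        rw [le_div_iff₀ hs, one_mul]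
        exact hsr
      have hcont : ContinuousOn Fa (Icc a 2) := by
        apply Continuous.continuousOn
        exact (Real.continuous_sqrt.comp (by continuity)).sub continuous_id
      have hint : IntegrableOn φ (Ioc a 2) volume :=
        intervalIntegral.integrableOn_deriv_of_nonneg hcont hd (fun x hx => hφpos x hx.1)
      have hFTC : (∫ r in Ioc a 2, φ r) = Fa 2 - Fa a := by
        rw [← intervalIntegral.integral_of_le ha2]
        exact intervalIntegral.integral_eq_sub_of_hasDeriv_right_of_le ha2 hcont
          (fun x hx => (hd x hx).hasDerivWithinAt)
          ((intervalIntegrable_iff_integrableOn_Ioc_of_le ha2).2 hint)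
      have hpt : ∀ r ∈ Ioc m 2, F r = ENNReal.ofReal (φ r) := by
        intro r hr
        have hra : a < r := hma' ▸ hr.1
        have hr0 : 0 < r := ha.trans hra
        have h1 : 0 < r ^ 2 - a ^ 2 := by nlinarith [ha]
        have hs : 0 < Real.sqrt (r ^ 2 - a ^ 2) := Real.sqrt_pos.2 h1
        have hsr : Real.sqrt (r ^ 2 - a ^ 2) ≤ r := by
          have h' := Real.sqrt_le_sqrt (show r ^ 2 - a ^ 2 ≤ r ^ 2 by nlinarith)
          rwa [Real.sqrt_sq hr0.le] at h'
        have hdiv : 1 / r ≤ 1 / Real.sqrt (r ^ 2 - a ^ 2) :=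
          one_div_le_one_div_of_le hs hsr
        simp only [hF, if_pos hr.2, if_neg (not_lt.2 hra.le)]
        rw [abs_sub_comm, abs_of_nonneg (sub_nonneg.2 hdiv), ← ENNReal.ofReal_mul hr0.le]
        congr 1
        simp only [hφ]
        field_simp
      rw [setLIntegral_congr_fun measurableSet_Ioc hpt, hma']
      rw [← MeasureTheory.ofReal_integral_eq_lintegral_ofReal hint
        ((ae_restrict_iff' measurableSet_Ioc).2
          (Filter.Eventually.of_forall fun r hr => hφpos r hr.1))]
      rw [hFTC]
      apply ENNReal.ofReal_le_ofReal
      have h4 : Real.sqrt (4 - a ^ 2) ≤ 2 := by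
        have h' := Real.sqrt_le_sqrt (show (4:ℝ) - a ^ 2 ≤ 2 ^ 2 by nlinarith [ha])
        rwa [Real.sqrt_sq two_pos.le] at h'
      simp only [hFa]
      rw [show a ^ 2 - a ^ 2 = 0 by ring, Real.sqrt_zero]
      have : (2:ℝ) ^ 2 - a ^ 2 = 4 - a ^ 2 := by norm_num
      rw [this]
      linarith
  calc (∫⁻ r in Ioc (0 : ℝ) m, F r) + ((∫⁻ r in Ioc m 2, F r) + ∫⁻ r in Ioi (2:ℝ), F r)
      ≤ ENNReal.ofReal a + (ENNReal.ofReal a + 0) := by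
        apply add_le_add
        · rw [piece1]; exact ENNReal.ofReal_le_ofReal hma
        apply add_le_add piece2
        rw [piece3]
    _ = ENNReal.ofReal (2 * a) := by
        rw [add_zero, ← ENNReal.ofReal_add ha.le ha.le, two_mul]

theorem kfun_polar (c r θ : ℝ) (hr : 0 ≤ r) :
    kfun c ((0 : ℝ), (0 : ℝ)) (r * Real.cos θ, r * Real.sin θ)
      = if r < |c| then 0 else 1 / Real.sqrt (r ^ 2 - c ^ 2) := by
  unfold kfun
  rw [show (((0:ℝ),(0:ℝ)).1 - (r * Real.cos θ, r * Real.sin θ).1) ^ 2 +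
      (((0:ℝ),(0:ℝ)).2 - (r * Real.cos θ, r * Real.sin θ).2) ^ 2
      = (Real.sin θ ^ 2 + Real.cos θ ^ 2) * r ^ 2 from by ring,
    Real.sin_sq_add_cos_sq, one_mul, Real.sqrt_sq hr]

/-- For every `h ∈ ℝ`,
`∫_{|y| ≤ 2} |k_0(0,y) − k_h(0,y)| dy ≤ 4π|h|`. -/
theorem kernel_difference_estimate (h : ℝ) :
    (∫ y in {y : ℝ × ℝ | y.1 ^ 2 + y.2 ^ 2 ≤ 4},
        |kfun 0 ((0 : ℝ), (0 : ℝ)) y - kfun h ((0 : ℝ), (0 : ℝ)) y|) ≤ 4 * π * |h| := by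
  rcases eq_or_ne h 0 with rfl | hne
  · simp
  have ha : 0 < |h| := abs_pos.2 hne
  have hS : MeasurableSet {y : ℝ × ℝ | y.1 ^ 2 + y.2 ^ 2 ≤ 4} :=
    measurableSet_le (by fun_prop) measurable_const
  have hkm : ∀ c : ℝ, Measurable (fun y : ℝ × ℝ => kfun c ((0:ℝ),(0:ℝ)) y) := by
    intro c
    unfold kfun
    apply Measurable.ite
    · exact measurableSet_lt (by fun_prop) measurable_const
    · exact measurable_const
    · fun_prop
  have hgm : Measurable (fun y : ℝ × ℝ =>
      |kfun 0 ((0:ℝ),(0:ℝ)) y - kfun h ((0:ℝ),(0:ℝ)) y|) := ((hkm 0).sub (hkm h)).abs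
  set G : ℝ × ℝ → ENNReal := fun y =>
    ENNReal.ofReal |kfun 0 ((0:ℝ),(0:ℝ)) y - kfun h ((0:ℝ),(0:ℝ)) y| with hG
  have hGm : Measurable G := ENNReal.measurable_ofReal.comp hgm
  rw [MeasureTheory.integral_eq_lintegral_of_nonneg_ae
      (Filter.Eventually.of_forall fun y => abs_nonneg _) hgm.aestronglyMeasurable]
  apply ENNReal.toReal_le_of_le_ofReal (by positivity)
  -- pass to the full-plane lintegral of the indicator
  rw [← lintegral_indicator hS]
  rw [← my_lintegral_comp_polarCoord_symm]
  have hsymm : (⇑polarCoord.symm : ℝ × ℝ → ℝ × ℝ)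
      = fun p => (p.1 * Real.cos p.2, p.1 * Real.sin p.2) := rfl
  have hfm : Measurable fun p : ℝ × ℝ => ENNReal.ofReal p.1 *
      ({y : ℝ × ℝ | y.1 ^ 2 + y.2 ^ 2 ≤ 4}.indicator G) (polarCoord.symm p) := by
    apply Measurable.mul
    · exact ENNReal.measurable_ofReal.comp measurable_fst
    · apply (hGm.indicator hS).comp
      rw [hsymm]
      fun_prop
  rw [polarCoord_target, Measure.volume_eq_prod, ← Measure.prod_restrict,
    MeasureTheory.lintegral_prod _ hfm.aemeasurable]
  set c : ℝ → ENNReal := fun r => ENNReal.ofReal r *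
      (if r ≤ 2 then
        ENNReal.ofReal
          |1 / r - (if r < |h| then 0 else 1 / Real.sqrt (r ^ 2 - |h| ^ 2))| else 0)
    with hc
  have key : ∀ r ∈ Ioi (0:ℝ),
      (∫⁻ θ in Ioo (-π) π, ENNReal.ofReal (r, θ).1 *
        ({y : ℝ × ℝ | y.1 ^ 2 + y.2 ^ 2 ≤ 4}.indicator G) (polarCoord.symm (r, θ)))
      = ENNReal.ofReal (2 * π) * c r := by
    intro r hr
    have hr0 : (0:ℝ) < r := hr
    have hconst : ∀ θ : ℝ, ENNReal.ofReal (r, θ).1 *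
        ({y : ℝ × ℝ | y.1 ^ 2 + y.2 ^ 2 ≤ 4}.indicator G) (polarCoord.symm (r, θ)) = c r := by
      intro θ
      have hsy : polarCoord.symm (r, θ) = (r * Real.cos θ, r * Real.sin θ) := rfl
      have hnorm : (r * Real.cos θ) ^ 2 + (r * Real.sin θ) ^ 2 = r ^ 2 := by
        rw [show (r * Real.cos θ) ^ 2 + (r * Real.sin θ) ^ 2
            = (Real.sin θ ^ 2 + Real.cos θ ^ 2) * r ^ 2 from by ring,
          Real.sin_sq_add_cos_sq, one_mul]
      have hmem : (r * Real.cos θ, r * Real.sin θ) ∈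
          {y : ℝ × ℝ | y.1 ^ 2 + y.2 ^ 2 ≤ 4} ↔ r ≤ 2 := by
        simp only [Set.mem_setOf_eq, hnorm]
        constructor
        · intro h'; nlinarith
        · intro h'; nlinarith
      rw [hsy, Set.indicator_apply]
      by_cases h2 : r ≤ 2
      · rw [if_pos (hmem.2 h2), hG]
        simp only [hc, if_pos h2]
        congr 2
        rw [kfun_polar 0 r θ hr0.le, kfun_polar h r θ hr0.le, abs_zero, sq_abs]
        rw [if_neg (not_lt.2 hr0.le)]
        norm_num
        rw [Real.sqrt_sq hr0.le]
      · rw [if_neg fun hmm => h2 (hmem.1 hmm)]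
        simp only [hc, if_neg h2, mul_zero]
    calc (∫⁻ θ in Ioo (-π) π, ENNReal.ofReal (r, θ).1 *
          ({y : ℝ × ℝ | y.1 ^ 2 + y.2 ^ 2 ≤ 4}.indicator G) (polarCoord.symm (r, θ)))
        = ∫⁻ _ in Ioo (-π) π, c r := by simp only [hconst]
      _ = c r * volume (Ioo (-π) π) := setLIntegral_const _ _
      _ = ENNReal.ofReal (2 * π) * c r := by
          rw [Real.volume_Ioo, mul_comm]
          congr 2
          ring
  rw [setLIntegral_congr_fun measurableSet_Ioi key,
    lintegral_const_mul' _ _ ENNReal.ofReal_ne_top]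
  calc ENNReal.ofReal (2 * π) * ∫⁻ r in Ioi (0:ℝ), c r
      ≤ ENNReal.ofReal (2 * π) * ENNReal.ofReal (2 * |h|) := by
        gcongr
        exact oneD_estimate ha
    _ = ENNReal.ofReal (4 * π * |h|) := by
        rw [← ENNReal.ofReal_mul (by positivity)]
        congr 1
        ring

end
end

section
/- There exists a constant C > 0 (independent of f, δ_s and the grid) such that for every f ∈ L²(Ω), ‖R_{δ_s} f − R f‖_{L²(Ω')} ≤ C · sup_{|h| < (3/2)δ_s} ω_{R f}(h, 0). (The proof yields C = √3.) -/
open MeasureTheory Real Set Filter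

noncomputable section

namespace RadonAux
open scoped ENNReal



variable {α : Type*} [MeasurableSpace α] {μ : Measure α}

theorem integral_le_toReal (f : α → ℝ) (hf : ∀ x, 0 ≤ f x) :
    ∫ x, f x ∂μ ≤ (∫⁻ x, ENNReal.ofReal (f x) ∂μ).toReal := by
  by_cases h : Integrable f μ
  · rw [integral_eq_lintegral_of_nonneg_ae (ae_of_all _ hf) h.1]
  · rw [integral_undef h]; exact ENNReal.toReal_nonneg

theorem ofReal_sq (a : ℝ) : ENNReal.ofReal (a ^ 2) = ENNReal.ofReal |a| ^ 2 := by
  rw [← sq_abs, ENNReal.ofReal_pow (abs_nonneg a)]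

theorem lintegral_CS_sq (u v : α → ℝ≥0∞) (hu : AEMeasurable u μ) (hv : AEMeasurable v μ) :
    (∫⁻ a, u a * v a ∂μ) ^ 2 ≤ (∫⁻ a, u a ∂μ) * ∫⁻ a, u a * v a ^ 2 ∂μ := by
  have hconj : (2:ℝ).HolderConjugate 2 := Real.HolderConjugate.two_two
  have key := ENNReal.lintegral_mul_le_Lp_mul_Lq μ hconj
    (f := fun a => u a ^ (1/2:ℝ)) (g := fun a => u a ^ (1/2:ℝ) * v a)
    (hu.pow_const _) ((hu.pow_const _).mul hv)
  have h1 : ∀ a, (fun a => u a ^ (1/2:ℝ)) a * (fun a => u a ^ (1/2:ℝ) * v a) a = u a * v a := by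
    intro a
    rw [← mul_assoc, ← ENNReal.rpow_add_of_nonneg _ _ (by norm_num) (by norm_num)]
    norm_num
  have h2 : ∀ x : ℝ≥0∞, (x ^ (1/2:ℝ)) ^ (2:ℝ) = x := by
    intro x
    rw [← ENNReal.rpow_mul]; norm_num
  have key2 : (∫⁻ a, u a * v a ∂μ) ≤
      (∫⁻ a, u a ∂μ) ^ (1/2:ℝ) * (∫⁻ a, u a * v a ^ 2 ∂μ) ^ (1/2:ℝ) := by
    have e0 : ∫⁻ a, ((fun a => u a ^ (1/2:ℝ)) * fun a => u a ^ (1/2:ℝ) * v a) a ∂μ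
        = ∫⁻ a, u a * v a ∂μ := lintegral_congr fun a => h1 a
    rw [e0] at key
    refine key.trans (le_of_eq ?_)
    congr 2
    · refine lintegral_congr fun a => h2 _
    · refine lintegral_congr fun a => ?_
      rw [ENNReal.mul_rpow_of_nonneg _ _ (by norm_num : (0:ℝ) ≤ 2), h2,
        ← ENNReal.rpow_natCast (v a) 2]
      norm_num
  calc (∫⁻ a, u a * v a ∂μ) ^ 2
      ≤ ((∫⁻ a, u a ∂μ) ^ (1/2:ℝ) * (∫⁻ a, u a * v a ^ 2 ∂μ) ^ (1/2:ℝ)) ^ 2 :=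
        pow_le_pow_left' key2 2
    _ = _ := by
        rw [mul_pow]
        congr 1 <;>
        · rw [← ENNReal.rpow_natCast (_ ^ (1/2:ℝ)) 2, ← ENNReal.rpow_mul]
          norm_num


/-- rotation as a linear map -/
def rotL (φ : ℝ) : (ℝ × ℝ) →ₗ[ℝ] (ℝ × ℝ) :=
  Matrix.toLin (Module.Basis.finTwoProd ℝ) (Module.Basis.finTwoProd ℝ)
    !![Real.cos φ, -Real.sin φ; Real.sin φ, Real.cos φ]

theorem rotL_det (φ : ℝ) : LinearMap.det (rotL φ) = 1 := by
  rw [rotL, LinearMap.det_toLin, Matrix.det_fin_two_of]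
  ring_nf
  rw [← Real.sin_sq_add_cos_sq φ]; ring

theorem rotL_apply (φ : ℝ) (z : ℝ × ℝ) :
    rotL φ z = z.1 • dirv φ + z.2 • dirp φ := by
  rw [rotL, Matrix.toLin_finTwoProd_apply]
  simp [dirv, dirp, Prod.ext_iff, smul_eq_mul]
  constructor <;> ring

theorem rot_mp (φ : ℝ) :
    MeasurePreserving (fun z : ℝ × ℝ => z.1 • dirv φ + z.2 • dirp φ)
      (volume : Measure (ℝ × ℝ)) volume := by
  have hd : LinearMap.det (rotL φ) ≠ 0 := by rw [rotL_det]; norm_num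
  have : MeasurePreserving (rotL φ) (volume : Measure (ℝ × ℝ)) volume := by
    refine ⟨(LinearMap.continuous_of_finiteDimensional _).measurable, ?_⟩
    rw [Measure.map_linearMap_addHaar_eq_smul_addHaar volume hd, rotL_det]
    norm_num
  have e : (fun z : ℝ × ℝ => z.1 • dirv φ + z.2 • dirp φ) = fun z => rotL φ z := by
    funext z; rw [rotL_apply]
  rw [e]; exact this

theorem ae_add_right {p : ℝ → Prop} (h : ℝ) (hp : ∀ᵐ s : ℝ, p s) :
    ∀ᵐ s : ℝ, p (s + h) :=
  (measurePreserving_add_right volume h).quasiMeasurePreserving.tendsto_ae.eventually hp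

/- hatw facts -/
theorem hatw_nonneg (δ t : ℝ) : 0 ≤ hatw δ t := le_max_left _ _

theorem hatw_le (δ t : ℝ) (hδ : 0 ≤ δ) : hatw δ t ≤ δ :=
  max_le hδ (by have := abs_nonneg t; linarith)

theorem hatw_eq_zero {δ t : ℝ} (h : δ ≤ |t|) : hatw δ t = 0 :=
  max_eq_left (by linarith)

theorem hatw_continuous (δ c : ℝ) : Continuous fun t : ℝ => hatw δ (t - c) := by
  have h1 : Continuous fun t : ℝ => δ - |t - c| :=
    continuous_const.sub (continuous_abs.comp (continuous_id.sub continuous_const))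
  exact continuous_const.max h1

theorem hatw_integrable (δ : ℝ) (hδ : 0 < δ) (c : ℝ) :
    Integrable (fun t => hatw δ (t - c)) (volume : Measure ℝ) := by
  have hcont : Continuous fun t => hatw δ (t - c) := hatw_continuous δ c
  refine hcont.integrable_of_hasCompactSupport ?_
  refine HasCompactSupport.intro (isCompact_Icc (a := c - δ) (b := c + δ)) ?_
  intro x hx
  simp only [mem_Icc, not_and_or, not_le] at hx
  refine hatw_eq_zero ?_
  rcases hx with h | h
  · rw [abs_sub_comm, abs_of_pos (by linarith)]; linarith
  · rw [abs_of_pos (by linarith)]; linarith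

theorem hatw_integral (δ : ℝ) (hδ : 0 < δ) (c : ℝ) :
    ∫ t : ℝ, hatw δ (t - c) = δ ^ 2 := by
  rw [integral_sub_right_eq_self (fun t => hatw δ t) c]
  have e : (fun t : ℝ => hatw δ t) = Set.indicator (Icc (-δ) δ) (fun t => δ - |t|) := by
    funext t
    by_cases ht : t ∈ Icc (-δ) δ
    · rw [Set.indicator_of_mem ht, hatw, max_eq_right]
      rw [mem_Icc] at ht
      rw [sub_nonneg]
      exact abs_le.mpr ht
    · rw [Set.indicator_of_notMem ht, hatw, max_eq_left]
      rw [mem_Icc, not_and_or, not_le, not_le] at ht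
      rcases ht with h | h
      · rw [abs_of_neg (by linarith)]; linarith
      · rw [abs_of_pos (by linarith)]; linarith
  rw [e, integral_indicator measurableSet_Icc, integral_Icc_eq_integral_Ioc,
    ← intervalIntegral.integral_of_le (by linarith)]
  have hsplit : ∫ t in (-δ)..δ, (δ - |t|) =
      (∫ t in (-δ)..(0:ℝ), (δ - |t|)) + ∫ t in (0:ℝ)..δ, (δ - |t|) := by
    rw [intervalIntegral.integral_add_adjacent_intervals] <;>
    · apply Continuous.intervalIntegrable; continuity
  have h1 : ∫ t in (-δ)..(0:ℝ), (δ - |t|) = ∫ t in (-δ)..(0:ℝ), (δ + t) := by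
    apply intervalIntegral.integral_congr
    intro t ht
    rw [uIcc_of_le (by linarith), mem_Icc] at ht
    show δ - |t| = δ + t
    rw [abs_of_nonpos (by linarith [ht.2])]; ring
  have h2 : ∫ t in (0:ℝ)..δ, (δ - |t|) = ∫ t in (0:ℝ)..δ, (δ - t) := by
    apply intervalIntegral.integral_congr
    intro t ht
    rw [uIcc_of_le (by linarith), mem_Icc] at ht
    show δ - |t| = δ - t
    rw [abs_of_nonneg (by linarith [ht.1])]
  rw [hsplit, h1, h2]
  rw [intervalIntegral.integral_add (intervalIntegrable_const) intervalIntegral.intervalIntegrable_id,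
    intervalIntegral.integral_sub (intervalIntegrable_const) intervalIntegral.intervalIntegrable_id]
  simp [integral_id]
  ring

theorem hatw_lintegral (δ : ℝ) (hδ : 0 < δ) (c : ℝ) :
    ∫⁻ t : ℝ, ENNReal.ofReal (hatw δ (t - c)) = ENNReal.ofReal (δ ^ 2) := by
  rw [← ofReal_integral_eq_lintegral_ofReal (hatw_integrable δ hδ c)
    (ae_of_all _ fun t => hatw_nonneg δ _), hatw_integral δ hδ c]

/- sCell facts -/
theorem sCell_disjoint {δs : ℝ} (hδ : 0 < δs) {P p q : ℕ} (hpq : p ≠ q) :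
    Disjoint (sCell δs P p) (sCell δs P q) := by
  rw [sCell, sCell, Set.Ico_disjoint_Ico]
  rcases hpq.lt_or_gt with h | h
  · have : sCen δs P p + δs ≤ sCen δs P q := by
      rw [sCen, sCen]
      have : (p:ℝ) + 1 ≤ q := by exact_mod_cast h
      nlinarith
    calc min (sCen δs P p + δs / 2) (sCen δs P q + δs / 2) ≤ sCen δs P p + δs / 2 :=
          min_le_left _ _
      _ ≤ sCen δs P q - δs / 2 := by linarith
      _ ≤ max (sCen δs P p - δs / 2) (sCen δs P q - δs / 2) := le_max_right _ _
  · have : sCen δs P q + δs ≤ sCen δs P p := by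
      rw [sCen, sCen]
      have : (q:ℝ) + 1 ≤ p := by exact_mod_cast h
      nlinarith
    calc min (sCen δs P p + δs / 2) (sCen δs P q + δs / 2) ≤ sCen δs P q + δs / 2 :=
          min_le_right _ _
      _ ≤ sCen δs P p - δs / 2 := by linarith
      _ ≤ max (sCen δs P p - δs / 2) (sCen δs P q - δs / 2) := le_max_left _ _

theorem sCell_dist {δs : ℝ} (hδ : 0 < δs) {P p : ℕ} {s : ℝ} (hs : s ∈ sCell δs P p) :
    |s - sCen δs P p| ≤ δs / 2 := by
  rw [sCell, mem_Ico] at hs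
  rw [abs_le]; constructor <;> linarith [hs.1, hs.2]


theorem measurable_rot2 :
    Measurable fun z : (ℝ × ℝ) × ℝ => z.1.1 • dirv z.1.2 + z.2 • dirp z.1.2 := by
  have e : (fun z : (ℝ × ℝ) × ℝ => z.1.1 • dirv z.1.2 + z.2 • dirp z.1.2) =
      fun z : (ℝ × ℝ) × ℝ =>
        ((z.1.1 * Real.cos z.1.2 - z.2 * Real.sin z.1.2,
          z.1.1 * Real.sin z.1.2 + z.2 * Real.cos z.1.2) : ℝ × ℝ) := by
    funext z
    simp [dirv, dirp, Prod.ext_iff, smul_eq_mul]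
    constructor <;> ring
  rw [e]
  apply Measurable.prodMk
  · exact (measurable_fst.fst.mul measurable_fst.snd.cos).sub
      (measurable_snd.mul measurable_fst.snd.sin)
  · exact (measurable_fst.fst.mul measurable_fst.snd.sin).add
      (measurable_snd.mul measurable_fst.snd.cos)

theorem measurable_radon {f₀ : ℝ × ℝ → ℝ} (hf₀ : Measurable f₀) :
    Measurable fun z : ℝ × ℝ => Radon f₀ z.1 z.2 := by
  have h : StronglyMeasurable fun p : (ℝ × ℝ) × ℝ =>
      f₀ (p.1.1 • dirv p.1.2 + p.2 • dirp p.1.2) :=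
    (hf₀.comp measurable_rot2).stronglyMeasurable
  exact h.integral_prod_right'.measurable

theorem radon_ae_eq {f f₀ : ℝ × ℝ → ℝ} (hff₀ : f =ᵐ[(volume : Measure (ℝ × ℝ))] f₀) (φ : ℝ) :
    ∀ᵐ s : ℝ, Radon f s φ = Radon f₀ s φ := by
  set bad : Set (ℝ × ℝ) := toMeasurable volume {x | f x ≠ f₀ x} with hbaddef
  have hbad : volume bad = 0 := by
    rw [measure_toMeasurable]
    exact hff₀
  have hbadm : MeasurableSet bad := measurableSet_toMeasurable _ _
  have key : ∀ᵐ z : ℝ × ℝ, (z.1 • dirv φ + z.2 • dirp φ) ∉ bad := by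
    have : volume ((fun z : ℝ × ℝ => z.1 • dirv φ + z.2 • dirp φ) ⁻¹' bad) = 0 := by
      rw [(rot_mp φ).measure_preimage hbadm.nullMeasurableSet, hbad]
    exact measure_eq_zero_iff_ae_notMem.1 this
  have key2 : ∀ᵐ s : ℝ, ∀ᵐ t : ℝ, (s • dirv φ + t • dirp φ) ∉ bad := by
    have := (Measure.volume_eq_prod (α := ℝ) (β := ℝ)) ▸ key
    exact Measure.ae_ae_of_ae_prod this
  filter_upwards [key2] with s hs
  rw [Radon, Radon]
  apply integral_congr_ae
  filter_upwards [hs] with t ht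
  by_contra hne
  exact ht (subset_toMeasurable _ _ (by exact hne))

theorem radon_sq_bound {f₀ : ℝ × ℝ → ℝ} (hm : Measurable f₀)
    (hsupp : ∀ x, x ∉ unitDisk → f₀ x = 0) (φ : ℝ) :
    ∫⁻ s : ℝ, ENNReal.ofReal (Radon f₀ s φ ^ 2) ≤
      ENNReal.ofReal 2 * ∫⁻ x : ℝ × ℝ, ENNReal.ofReal (f₀ x ^ 2) := by
  have hrotm : Measurable fun z : ℝ × ℝ => z.1 • dirv φ + z.2 • dirp φ := (rot_mp φ).measurable
  have hjm : Measurable fun z : ℝ × ℝ => ENNReal.ofReal (f₀ (z.1 • dirv φ + z.2 • dirp φ) ^ 2) :=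
    (((hm.comp hrotm).pow_const 2).ennreal_ofReal)
  have pointwise : ∀ s : ℝ, ENNReal.ofReal (Radon f₀ s φ ^ 2) ≤
      ENNReal.ofReal 2 * ∫⁻ t : ℝ, ENNReal.ofReal (f₀ (s • dirv φ + t • dirp φ) ^ 2) := by
    intro s
    set v : ℝ → ℝ≥0∞ := fun t => ENNReal.ofReal |f₀ (s • dirv φ + t • dirp φ)| with hv
    have hvm : Measurable v := ((hm.comp (hrotm.comp (measurable_const.prodMk measurable_id))).abs).ennreal_ofReal
    set χ : ℝ → ℝ≥0∞ := Set.indicator (Icc (-1 : ℝ) 1) (fun _ => (1 : ℝ≥0∞)) with hχ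
    have hχm : Measurable χ := measurable_const.indicator measurableSet_Icc
    have hvchi : ∀ t, v t = χ t * v t := by
      intro t
      by_cases ht : t ∈ Icc (-1 : ℝ) 1
      · rw [hχ, Set.indicator_of_mem ht, one_mul]
      · have h1 : (1:ℝ) < |t| := by
          rw [mem_Icc, not_and_or, not_le, not_le] at ht
          rcases ht with h | h
          · rw [abs_of_neg (by linarith)]; linarith
          · rw [abs_of_pos (by linarith)]; linarith
        have hpt : (s • dirv φ + t • dirp φ) ∉ unitDisk := by
          simp only [unitDisk, dirv, dirp, mem_setOf_eq, not_lt, Prod.fst, Prod.snd,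
            smul_eq_mul, Prod.mk_add_mk, Prod.smul_mk]
          have ht2 : 1 ≤ t ^ 2 := by nlinarith [sq_abs t]
          have hexp : (s * Real.cos φ + t * -Real.sin φ) ^ 2 +
              (s * Real.sin φ + t * Real.cos φ) ^ 2 = s ^ 2 + t ^ 2 := by
            have h := Real.sin_sq_add_cos_sq φ
            linear_combination (s ^ 2 + t ^ 2) * h
          rw [hexp]
          nlinarith [sq_nonneg s]
        rw [hv]
        simp only [hsupp _ hpt, abs_zero, ENNReal.ofReal_zero, mul_zero]
    have step1 : ENNReal.ofReal (Radon f₀ s φ ^ 2) ≤ (∫⁻ t : ℝ, v t) ^ 2 := by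
      rw [ofReal_sq]
      apply pow_le_pow_left' _ 2
      calc ENNReal.ofReal |Radon f₀ s φ|
          ≤ ENNReal.ofReal ((∫⁻ t : ℝ, v t).toReal) := by
            apply ENNReal.ofReal_le_ofReal
            rw [← Real.norm_eq_abs, Radon]
            refine (norm_integral_le_lintegral_norm _).trans (le_of_eq ?_)
            have e3 : (∫⁻ t : ℝ, ENNReal.ofReal ‖f₀ (s • dirv φ + t • dirp φ)‖) =
                ∫⁻ t : ℝ, v t := lintegral_congr fun t => by rw [Real.norm_eq_abs]
            rw [e3]
        _ ≤ ∫⁻ t : ℝ, v t := ENNReal.ofReal_toReal_le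
    have step2 : (∫⁻ t : ℝ, v t) ^ 2 ≤
        ENNReal.ofReal 2 * ∫⁻ t : ℝ, ENNReal.ofReal (f₀ (s • dirv φ + t • dirp φ) ^ 2) := by
      have e1 : (∫⁻ t : ℝ, v t) = ∫⁻ t : ℝ, χ t * v t := lintegral_congr hvchi
      rw [e1]
      refine (lintegral_CS_sq χ v hχm.aemeasurable hvm.aemeasurable).trans ?_
      have e2 : (∫⁻ t : ℝ, χ t) = ENNReal.ofReal 2 := by
        rw [hχ, lintegral_indicator measurableSet_Icc]
        simp [Real.volume_Icc]
        norm_num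
      rw [e2]
      apply mul_le_mul_right
      refine lintegral_mono fun t => ?_
      calc χ t * v t ^ 2 ≤ 1 * v t ^ 2 := by
            apply mul_le_mul_left
            rw [hχ]
            exact Set.indicator_le_self' (fun _ _ => zero_le_one) t
        _ = v t ^ 2 := one_mul _
        _ = ENNReal.ofReal (f₀ (s • dirv φ + t • dirp φ) ^ 2) := (ofReal_sq _).symm
    exact step1.trans step2
  calc ∫⁻ s : ℝ, ENNReal.ofReal (Radon f₀ s φ ^ 2)
      ≤ ∫⁻ s : ℝ, ENNReal.ofReal 2 *
          ∫⁻ t : ℝ, ENNReal.ofReal (f₀ (s • dirv φ + t • dirp φ) ^ 2) :=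
        lintegral_mono pointwise
    _ = ENNReal.ofReal 2 * ∫⁻ s : ℝ, ∫⁻ t : ℝ,
          ENNReal.ofReal (f₀ (s • dirv φ + t • dirp φ) ^ 2) := by
        rw [lintegral_const_mul]
        exact hjm.lintegral_prod_right'
    _ = ENNReal.ofReal 2 * ∫⁻ z : ℝ × ℝ,
          ENNReal.ofReal (f₀ (z.1 • dirv φ + z.2 • dirp φ) ^ 2) := by
        congr 1
        rw [Measure.volume_eq_prod, lintegral_prod _ hjm.aemeasurable]
    _ = ENNReal.ofReal 2 * ∫⁻ x : ℝ × ℝ, ENNReal.ofReal (f₀ x ^ 2) := by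
        congr 1
        exact (rot_mp φ).lintegral_comp ((hm.pow_const 2).ennreal_ofReal)

theorem hatwG_integrable {δ : ℝ} (hδ : 0 < δ) (c : ℝ) {G : ℝ → ℝ} (hGm : Measurable G)
    (hG2 : ∫⁻ s : ℝ, ENNReal.ofReal (G s ^ 2) < ⊤) :
    Integrable (fun t => hatw δ (t - c) * G t) (volume : Measure ℝ) := by
  have hwm : Measurable fun t : ℝ => hatw δ (t - c) := (hatw_continuous δ c).measurable
  set u : ℝ → ℝ≥0∞ := fun t => ENNReal.ofReal (hatw δ (t - c)) with hu
  set v : ℝ → ℝ≥0∞ := fun t => ENNReal.ofReal |G t| with hv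
  have hum : Measurable u := hwm.ennreal_ofReal
  have hvm : Measurable v := hGm.abs.ennreal_ofReal
  constructor
  · exact (hwm.mul hGm).aestronglyMeasurable
  · rw [hasFiniteIntegral_iff_norm]
    have e : ∀ t : ℝ, ENNReal.ofReal ‖hatw δ (t - c) * G t‖ = u t * v t := by
      intro t
      rw [Real.norm_eq_abs, abs_mul, abs_of_nonneg (hatw_nonneg δ _), ENNReal.ofReal_mul
        (hatw_nonneg δ _)]
    have e2 : (∫⁻ t : ℝ, ENNReal.ofReal ‖hatw δ (t - c) * G t‖) = ∫⁻ t : ℝ, u t * v t :=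
      lintegral_congr e
    rw [e2]
    have hsq : (∫⁻ t : ℝ, u t * v t) ^ 2 < ⊤ := by
      refine lt_of_le_of_lt (lintegral_CS_sq u v hum.aemeasurable hvm.aemeasurable) ?_
      have h1 : (∫⁻ t : ℝ, u t) = ENNReal.ofReal (δ ^ 2) := hatw_lintegral δ hδ c
      have h2 : (∫⁻ t : ℝ, u t * v t ^ 2) ≤ ENNReal.ofReal δ * ∫⁻ t : ℝ,
          ENNReal.ofReal (G t ^ 2) := by
        rw [← lintegral_const_mul _ ((hGm.pow_const 2).ennreal_ofReal)]
        refine lintegral_mono fun t => ?_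
        rw [← ofReal_sq]
        exact mul_le_mul_left (ENNReal.ofReal_le_ofReal (hatw_le δ _ hδ.le)) _
      calc (∫⁻ t : ℝ, u t) * ∫⁻ t : ℝ, u t * v t ^ 2
          ≤ ENNReal.ofReal (δ ^ 2) * (ENNReal.ofReal δ * ∫⁻ t : ℝ,
            ENNReal.ofReal (G t ^ 2)) := by rw [h1]; exact mul_le_mul_right h2 _
        _ < ⊤ := by
            refine ENNReal.mul_lt_top ENNReal.ofReal_lt_top ?_
            exact ENNReal.mul_lt_top ENNReal.ofReal_lt_top hG2
    have hne : (∫⁻ t : ℝ, u t * v t) ≠ ⊤ := by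
      intro htop
      rw [htop, ENNReal.top_pow (by norm_num)] at hsq
      exact lt_irrefl _ hsq
    exact lt_top_iff_ne_top.2 hne

set_option maxHeartbeats 2000000 in
theorem key_phi {δs : ℝ} (hδ : 0 < δs) {P : ℕ}
    (hcov : Ioo (-1 : ℝ) 1 ⊆ ⋃ p ∈ Finset.Icc 1 P, sCell δs P p)
    {G : ℝ → ℝ} (hGm : Measurable G) (hG2 : ∫⁻ s : ℝ, ENNReal.ofReal (G s ^ 2) < ⊤) :
    ∫⁻ s in Ioo (-1 : ℝ) 1, ENNReal.ofReal
        ((((δs ^ 2)⁻¹ * ∑ p ∈ Finset.Icc 1 P,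
          Set.indicator (sCell δs P p) (fun _ => (1 : ℝ)) s *
            ∫ t : ℝ, hatw δs (t - sCen δs P p) * G t) - G s) ^ 2) ≤
      (ENNReal.ofReal δs)⁻¹ * ∫⁻ h in Ioo (-(3 / 2 * δs)) (3 / 2 * δs), ∫⁻ s : ℝ,
        ENNReal.ofReal ((G (s + h) - G s) ^ 2) := by
  set J : Set ℝ := Ioo (-(3 / 2 * δs)) (3 / 2 * δs) with hJ
  set E : ℝ → ℝ := fun s => ((δs ^ 2)⁻¹ * ∑ p ∈ Finset.Icc 1 P,
      Set.indicator (sCell δs P p) (fun _ => (1 : ℝ)) s *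
        ∫ t : ℝ, hatw δs (t - sCen δs P p) * G t) - G s with hE
  set Ψ : ℝ → ℝ≥0∞ := fun s =>
      (ENNReal.ofReal δs)⁻¹ * ∫⁻ h in J, ENNReal.ofReal ((G (s + h) - G s) ^ 2) with hΨ
  have hδ2 : (0:ℝ) < δs ^ 2 := by positivity
  have hx0 : ENNReal.ofReal (δs ^ 2) ≠ 0 := by
    simp [ENNReal.ofReal_eq_zero, not_le, hδ2, hδ.ne']
  have hxt : ENNReal.ofReal (δs ^ 2) ≠ ⊤ := ENNReal.ofReal_ne_top
  -- measurability of the inner double integrand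
  have hDm : Measurable fun z : ℝ × ℝ => ENNReal.ofReal ((G (z.1 + z.2) - G z.1) ^ 2) :=
    ((((hGm.comp (measurable_fst.add measurable_snd)).sub
      (hGm.comp measurable_fst)).pow_const 2).ennreal_ofReal)
  have hΨm : Measurable Ψ := by
    apply Measurable.const_mul
    exact Measurable.lintegral_prod_right' (f := fun z : ℝ × ℝ =>
      ENNReal.ofReal ((G (z.1 + z.2) - G z.1) ^ 2)) (ν := volume.restrict J) hDm
  -- pointwise bound on each cell
  have hpoint : ∀ p ∈ Finset.Icc 1 P, ∀ s ∈ sCell δs P p,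
      ENNReal.ofReal (E s ^ 2) ≤ Ψ s := by
    intro p hp s hs
    set c := sCen δs P p with hc
    -- identity
    have hint1 : Integrable (fun t => hatw δs (t - c) * G t) volume :=
      hatwG_integrable hδ c hGm hG2
    have hint2 : Integrable (fun t => hatw δs (t - c) * G s) volume :=
      (hatw_integrable δs hδ c).mul_const (G s)
    have hsum : (∑ q ∈ Finset.Icc 1 P,
        Set.indicator (sCell δs P q) (fun _ => (1 : ℝ)) s *
          ∫ t : ℝ, hatw δs (t - sCen δs P q) * G t)
        = ∫ t : ℝ, hatw δs (t - c) * G t := by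
      rw [Finset.sum_eq_single_of_mem p hp]
      · rw [Set.indicator_of_mem hs, one_mul, hc]
      · intro q hq hqp
        have hnot : s ∉ sCell δs P q :=
          Set.disjoint_right.1 (sCell_disjoint hδ hqp) hs
        rw [Set.indicator_of_notMem hnot, zero_mul]
    have hsub : (∫ t : ℝ, hatw δs (t - c) * (G t - G s))
        = (∫ t : ℝ, hatw δs (t - c) * G t) - δs ^ 2 * G s := by
      have e1 : (fun t : ℝ => hatw δs (t - c) * (G t - G s))
          = fun t : ℝ => hatw δs (t - c) * G t - hatw δs (t - c) * G s := by
        funext t; ring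
      rw [e1, integral_sub hint1 hint2, integral_mul_const, hatw_integral δs hδ c]
    have hEeq : E s = (δs ^ 2)⁻¹ * ∫ t : ℝ, hatw δs (t - c) * (G t - G s) := by
      rw [hE]
      simp only []
      rw [hsum, hsub]
      field_simp
    -- Cauchy–Schwarz
    set u : ℝ → ℝ≥0∞ := fun t => ENNReal.ofReal (hatw δs (t - c)) with hu
    set vΔ : ℝ → ℝ≥0∞ := fun t => ENNReal.ofReal |G t - G s| with hvΔ
    have hum : Measurable u := (hatw_continuous δs c).measurable.ennreal_ofReal
    have hvm : Measurable vΔ := ((hGm.sub measurable_const).abs).ennreal_ofReal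
    have habs : ENNReal.ofReal |E s|
        ≤ (ENNReal.ofReal (δs ^ 2))⁻¹ * ∫⁻ t : ℝ, u t * vΔ t := by
      rw [hEeq, abs_mul, abs_of_pos (by positivity : (0:ℝ) < (δs ^ 2)⁻¹),
        ENNReal.ofReal_mul (by positivity)]
      rw [ENNReal.ofReal_inv_of_pos hδ2]
      apply mul_le_mul_right
      calc ENNReal.ofReal |∫ t : ℝ, hatw δs (t - c) * (G t - G s)|
          ≤ ENNReal.ofReal ((∫⁻ t : ℝ, u t * vΔ t).toReal) := by
            apply ENNReal.ofReal_le_ofReal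
            rw [← Real.norm_eq_abs]
            refine (norm_integral_le_lintegral_norm _).trans (le_of_eq ?_)
            have e3 : (∫⁻ t : ℝ, ENNReal.ofReal ‖hatw δs (t - c) * (G t - G s)‖)
                = ∫⁻ t : ℝ, u t * vΔ t := by
              refine lintegral_congr fun t => ?_
              rw [Real.norm_eq_abs, abs_mul, abs_of_nonneg (hatw_nonneg δs _),
                ENNReal.ofReal_mul (hatw_nonneg δs _)]
            rw [e3]
        _ ≤ ∫⁻ t : ℝ, u t * vΔ t := ENNReal.ofReal_toReal_le
    have hCS : (∫⁻ t : ℝ, u t * vΔ t) ^ 2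
        ≤ ENNReal.ofReal (δs ^ 2) * ∫⁻ t : ℝ, u t * ENNReal.ofReal ((G t - G s) ^ 2) := by
      refine (lintegral_CS_sq u vΔ hum.aemeasurable hvm.aemeasurable).trans ?_
      rw [hatw_lintegral δs hδ c]
      apply mul_le_mul_right
      refine le_of_eq (lintegral_congr fun t => ?_)
      rw [hvΔ]
      simp only []
      rw [← ofReal_sq]
    have hstep : ENNReal.ofReal (E s ^ 2)
        ≤ (ENNReal.ofReal (δs ^ 2))⁻¹ * ∫⁻ t : ℝ, u t * ENNReal.ofReal ((G t - G s) ^ 2) := by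
      rw [ofReal_sq]
      calc ENNReal.ofReal |E s| ^ 2
          ≤ ((ENNReal.ofReal (δs ^ 2))⁻¹ * ∫⁻ t : ℝ, u t * vΔ t) ^ 2 :=
            pow_le_pow_left' habs 2
        _ = ((ENNReal.ofReal (δs ^ 2))⁻¹) ^ 2 * (∫⁻ t : ℝ, u t * vΔ t) ^ 2 := by
            rw [mul_pow]
        _ ≤ ((ENNReal.ofReal (δs ^ 2))⁻¹) ^ 2 * (ENNReal.ofReal (δs ^ 2)
            * ∫⁻ t : ℝ, u t * ENNReal.ofReal ((G t - G s) ^ 2)) := mul_le_mul_right hCS _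
        _ = (ENNReal.ofReal (δs ^ 2))⁻¹ * ∫⁻ t : ℝ, u t * ENNReal.ofReal ((G t - G s) ^ 2) := by
            rw [pow_two, mul_assoc, ← mul_assoc ((ENNReal.ofReal (δs ^ 2))⁻¹)
              (ENNReal.ofReal (δs ^ 2)), ENNReal.inv_mul_cancel hx0 hxt, one_mul]
    -- change of variables t = s + h and kernel bound
    have hshift : (∫⁻ t : ℝ, u t * ENNReal.ofReal ((G t - G s) ^ 2))
        = ∫⁻ h : ℝ, ENNReal.ofReal (hatw δs (s + h - c))
            * ENNReal.ofReal ((G (s + h) - G s) ^ 2) := by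
      have hFm : Measurable fun t : ℝ => u t * ENNReal.ofReal ((G t - G s) ^ 2) :=
        hum.mul (((hGm.sub measurable_const).pow_const 2).ennreal_ofReal)
      rw [← (measurePreserving_add_right volume s).lintegral_comp hFm]
      refine lintegral_congr fun h => ?_
      rw [hu]
      simp only []
      rw [add_comm h s]
    have hkernel : ∀ h : ℝ, ENNReal.ofReal (hatw δs (s + h - c))
          * ENNReal.ofReal ((G (s + h) - G s) ^ 2)
        ≤ ENNReal.ofReal δs * Set.indicator J
            (fun h => ENNReal.ofReal ((G (s + h) - G s) ^ 2)) h := by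
      intro h
      by_cases hhJ : h ∈ J
      · rw [Set.indicator_of_mem hhJ]
        exact mul_le_mul_left (ENNReal.ofReal_le_ofReal (hatw_le δs _ hδ.le)) _
      · rw [Set.indicator_of_notMem hhJ, mul_zero]
        have hh : 3 / 2 * δs ≤ |h| := by
          rw [hJ, mem_Ioo, not_and_or, not_lt, not_lt] at hhJ
          rcases hhJ with h1 | h1
          · rw [abs_of_nonpos (by linarith)]; linarith
          · rw [abs_of_nonneg (by linarith)]; linarith
        have hd1 : |s - c| ≤ δs / 2 := sCell_dist hδ hs
        have : δs ≤ |s + h - c| := by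
          have h1 : |h| - |s - c| ≤ |s + h - c| := by
            have := abs_sub_abs_le_abs_sub h (-(s - c))
            rw [abs_neg, sub_neg_eq_add] at this
            calc |h| - |s - c| ≤ |h + (s - c)| := this
              _ = |s + h - c| := by ring_nf
          linarith
        rw [hatw_eq_zero this, ENNReal.ofReal_zero, zero_mul]
    have hkernel2 : (∫⁻ h : ℝ, ENNReal.ofReal (hatw δs (s + h - c))
          * ENNReal.ofReal ((G (s + h) - G s) ^ 2))
        ≤ ENNReal.ofReal δs * ∫⁻ h in J, ENNReal.ofReal ((G (s + h) - G s) ^ 2) := by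
      calc (∫⁻ h : ℝ, ENNReal.ofReal (hatw δs (s + h - c))
            * ENNReal.ofReal ((G (s + h) - G s) ^ 2))
          ≤ ∫⁻ h : ℝ, ENNReal.ofReal δs * Set.indicator J
              (fun h => ENNReal.ofReal ((G (s + h) - G s) ^ 2)) h :=
            lintegral_mono hkernel
        _ = ENNReal.ofReal δs * ∫⁻ h : ℝ, Set.indicator J
              (fun h => ENNReal.ofReal ((G (s + h) - G s) ^ 2)) h := by
            rw [lintegral_const_mul]
            exact (((hGm.comp (measurable_const.add measurable_id)).sub
              measurable_const).pow_const 2).ennreal_ofReal.indicator measurableSet_Ioo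
        _ = ENNReal.ofReal δs * ∫⁻ h in J, ENNReal.ofReal ((G (s + h) - G s) ^ 2) := by
            rw [lintegral_indicator measurableSet_Ioo]
    calc ENNReal.ofReal (E s ^ 2)
        ≤ (ENNReal.ofReal (δs ^ 2))⁻¹ * (ENNReal.ofReal δs
          * ∫⁻ h in J, ENNReal.ofReal ((G (s + h) - G s) ^ 2)) := by
          refine hstep.trans ?_
          rw [hshift]
          exact mul_le_mul_right hkernel2 _
      _ = Ψ s := by
          rw [hΨ]
          simp only []
          rw [← mul_assoc]
          congr 1
          rw [sq, ENNReal.ofReal_mul hδ.le, ENNReal.mul_inv (Or.inl (by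
            simp [ENNReal.ofReal_eq_zero, not_le, hδ])) (Or.inl ENNReal.ofReal_ne_top),
            mul_assoc, ENNReal.inv_mul_cancel (by
            simp [ENNReal.ofReal_eq_zero, not_le, hδ]) ENNReal.ofReal_ne_top, mul_one]
  -- assemble over the cells
  have hcellm : ∀ p ∈ Finset.Icc 1 P, MeasurableSet (sCell δs P p) :=
    fun p _ => measurableSet_Ico
  have hdisj : Set.PairwiseDisjoint (↑(Finset.Icc 1 P)) (sCell δs P) :=
    fun p _ q _ hpq => sCell_disjoint hδ hpq
  have hEm : Measurable fun s => ENNReal.ofReal (E s ^ 2) := by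
    apply Measurable.ennreal_ofReal
    apply Measurable.pow_const
    apply Measurable.sub ?_ hGm
    apply Measurable.const_mul
    apply Finset.measurable_sum
    intro p _
    exact ((measurable_const.indicator measurableSet_Ico).mul measurable_const)
  calc ∫⁻ s in Ioo (-1 : ℝ) 1, ENNReal.ofReal (E s ^ 2)
      ≤ ∫⁻ s in ⋃ p ∈ Finset.Icc 1 P, sCell δs P p, ENNReal.ofReal (E s ^ 2) :=
        lintegral_mono_set hcov
    _ = ∑ p ∈ Finset.Icc 1 P, ∫⁻ s in sCell δs P p, ENNReal.ofReal (E s ^ 2) :=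
        lintegral_biUnion_finset hdisj hcellm _
    _ ≤ ∑ p ∈ Finset.Icc 1 P, ∫⁻ s in sCell δs P p, Ψ s :=
        Finset.sum_le_sum fun p hp => setLIntegral_mono hΨm (hpoint p hp)
    _ = ∫⁻ s in ⋃ p ∈ Finset.Icc 1 P, sCell δs P p, Ψ s :=
        (lintegral_biUnion_finset hdisj hcellm _).symm
    _ ≤ ∫⁻ s : ℝ, Ψ s := setLIntegral_le_lintegral _ _
    _ = (ENNReal.ofReal δs)⁻¹ * ∫⁻ s : ℝ, ∫⁻ h in J,
          ENNReal.ofReal ((G (s + h) - G s) ^ 2) := by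
        rw [hΨ, lintegral_const_mul]
        exact Measurable.lintegral_prod_right' (ν := volume.restrict J) hDm
    _ = (ENNReal.ofReal δs)⁻¹ * ∫⁻ h in J, ∫⁻ s : ℝ,
          ENNReal.ofReal ((G (s + h) - G s) ^ 2) := by
        congr 1
        exact lintegral_lintegral_swap (hDm.aemeasurable)

section ModContLayer

variable {f f₀ : ℝ × ℝ → ℝ}

/-- joint measurability of the shifted difference -/
theorem meas_diff (hfm : Measurable f₀) :
    Measurable fun w : (ℝ × ℝ) × ℝ =>
      ENNReal.ofReal ((Radon f₀ (w.2 + w.1.2) w.1.1 - Radon f₀ w.2 w.1.1) ^ 2) := by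
  have hg := measurable_radon hfm
  have h1 : Measurable fun w : (ℝ × ℝ) × ℝ => Radon f₀ (w.2 + w.1.2) w.1.1 :=
    hg.comp ((measurable_snd.add measurable_fst.snd).prodMk measurable_fst.fst)
  have h2 : Measurable fun w : (ℝ × ℝ) × ℝ => Radon f₀ w.2 w.1.1 :=
    hg.comp (measurable_snd.prodMk measurable_fst.fst)
  exact ((h1.sub h2).pow_const 2).ennreal_ofReal

theorem meas_W (hfm : Measurable f₀) :
    Measurable fun φ : ℝ => ∫⁻ s : ℝ, ENNReal.ofReal (Radon f₀ s φ ^ 2) := by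
  have hg := measurable_radon hfm
  have : Measurable fun w : ℝ × ℝ => ENNReal.ofReal (Radon f₀ w.2 w.1 ^ 2) :=
    ((hg.comp (measurable_snd.prodMk measurable_fst)).pow_const 2).ennreal_ofReal
  exact this.lintegral_prod_right'

theorem meas_Linner (hfm : Measurable f₀) (h : ℝ) :
    Measurable fun φ : ℝ => ∫⁻ s : ℝ,
      ENNReal.ofReal ((Radon f₀ (s + h) φ - Radon f₀ s φ) ^ 2) := by
  have hg := measurable_radon hfm
  have h1 : Measurable fun w : ℝ × ℝ => Radon f₀ (w.2 + h) w.1 :=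
    hg.comp ((measurable_snd.add measurable_const).prodMk measurable_fst)
  have h2 : Measurable fun w : ℝ × ℝ => Radon f₀ w.2 w.1 :=
    hg.comp (measurable_snd.prodMk measurable_fst)
  exact (((h1.sub h2).pow_const 2).ennreal_ofReal).lintegral_prod_right'

theorem ofReal_sub_sq_le (a b : ℝ) :
    ENNReal.ofReal ((a - b) ^ 2) ≤ 2 * ENNReal.ofReal (a ^ 2) + 2 * ENNReal.ofReal (b ^ 2) := by
  have h1 : (a - b) ^ 2 ≤ 2 * a ^ 2 + 2 * b ^ 2 := by nlinarith [sq_nonneg (a + b)]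
  calc ENNReal.ofReal ((a - b) ^ 2) ≤ ENNReal.ofReal (2 * a ^ 2 + 2 * b ^ 2) :=
        ENNReal.ofReal_le_ofReal h1
    _ = ENNReal.ofReal (2 * a ^ 2) + ENNReal.ofReal (2 * b ^ 2) :=
        ENNReal.ofReal_add (by positivity) (by positivity)
    _ = 2 * ENNReal.ofReal (a ^ 2) + 2 * ENNReal.ofReal (b ^ 2) := by
        rw [ENNReal.ofReal_mul (by norm_num), ENNReal.ofReal_mul (by norm_num)]
        norm_num

theorem L_le (hfm : Measurable f₀) (h : ℝ) :
    (∫⁻ φ in Ioc (-π) π, ∫⁻ s : ℝ,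
        ENNReal.ofReal ((Radon f₀ (s + h) φ - Radon f₀ s φ) ^ 2))
      ≤ 4 * ∫⁻ φ in Ioc (-π) π, ∫⁻ s : ℝ, ENNReal.ofReal (Radon f₀ s φ ^ 2) := by
  have key : ∀ φ : ℝ, (∫⁻ s : ℝ, ENNReal.ofReal ((Radon f₀ (s + h) φ - Radon f₀ s φ) ^ 2))
      ≤ 4 * ∫⁻ s : ℝ, ENNReal.ofReal (Radon f₀ s φ ^ 2) := by
    intro φ
    have hGm : Measurable fun s => Radon f₀ s φ :=
      (measurable_radon hfm).comp (measurable_id.prodMk measurable_const)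
    have hshift : (∫⁻ s : ℝ, ENNReal.ofReal (Radon f₀ (s + h) φ ^ 2))
        = ∫⁻ s : ℝ, ENNReal.ofReal (Radon f₀ s φ ^ 2) :=
      (measurePreserving_add_right volume h).lintegral_comp ((hGm.pow_const 2).ennreal_ofReal)
    calc (∫⁻ s : ℝ, ENNReal.ofReal ((Radon f₀ (s + h) φ - Radon f₀ s φ) ^ 2))
        ≤ ∫⁻ s : ℝ, (2 * ENNReal.ofReal (Radon f₀ (s + h) φ ^ 2)
            + 2 * ENNReal.ofReal (Radon f₀ s φ ^ 2)) :=
          lintegral_mono fun s => ofReal_sub_sq_le _ _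
      _ = 2 * (∫⁻ s : ℝ, ENNReal.ofReal (Radon f₀ (s + h) φ ^ 2))
            + 2 * ∫⁻ s : ℝ, ENNReal.ofReal (Radon f₀ s φ ^ 2) := by
          rw [lintegral_add_left, lintegral_const_mul, lintegral_const_mul]
          · exact (hGm.pow_const 2).ennreal_ofReal
          · exact ((hGm.comp (measurable_id.add measurable_const)).pow_const 2).ennreal_ofReal
          · exact (((hGm.comp (measurable_id.add measurable_const)).pow_const 2).ennreal_ofReal).const_mul 2
      _ = 4 * ∫⁻ s : ℝ, ENNReal.ofReal (Radon f₀ s φ ^ 2) := by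
          rw [hshift]; ring
  calc (∫⁻ φ in Ioc (-π) π, ∫⁻ s : ℝ,
        ENNReal.ofReal ((Radon f₀ (s + h) φ - Radon f₀ s φ) ^ 2))
      ≤ ∫⁻ φ in Ioc (-π) π, 4 * ∫⁻ s : ℝ, ENNReal.ofReal (Radon f₀ s φ ^ 2) :=
        lintegral_mono fun φ => key φ
    _ = 4 * ∫⁻ φ in Ioc (-π) π, ∫⁻ s : ℝ, ENNReal.ofReal (Radon f₀ s φ ^ 2) :=
        lintegral_const_mul _ (meas_W hfm)

theorem modCont_eq (hfm : Measurable f₀)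
    (hff₀ : f =ᵐ[(volume : Measure (ℝ × ℝ))] f₀)
    (hT : (∫⁻ φ in Ioc (-π) π, ∫⁻ s : ℝ, ENNReal.ofReal (Radon f₀ s φ ^ 2)) ≠ ⊤) (h : ℝ) :
    modCont (Radon f) h 0
      = (∫⁻ φ in Ioc (-π) π, ∫⁻ s : ℝ,
          ENNReal.ofReal ((Radon f₀ (s + h) φ - Radon f₀ s φ) ^ 2)).toReal ^ (1/2:ℝ) := by
  have hLfin : (∫⁻ φ in Ioc (-π) π, ∫⁻ s : ℝ,
      ENNReal.ofReal ((Radon f₀ (s + h) φ - Radon f₀ s φ) ^ 2)) ≠ ⊤ := by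
    refine ne_top_of_le_ne_top ?_ (L_le hfm h)
    exact ENNReal.mul_ne_top (by norm_num) hT
  have hae_fin : ∀ᵐ φ ∂(volume.restrict (Ioc (-π) π)), (∫⁻ s : ℝ,
      ENNReal.ofReal ((Radon f₀ (s + h) φ - Radon f₀ s φ) ^ 2)) < ⊤ :=
    ae_lt_top (meas_Linner hfm h) hLfin
  have hinner : ∀ φ : ℝ, (∫ s : ℝ, (Radon f (s + h) (φ + 0) - Radon f s φ) ^ 2)
      = (∫⁻ s : ℝ, ENNReal.ofReal ((Radon f₀ (s + h) φ - Radon f₀ s φ) ^ 2)).toReal := by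
    intro φ
    have hGm : Measurable fun s => Radon f₀ s φ :=
      (measurable_radon hfm).comp (measurable_id.prodMk measurable_const)
    have hae1 : ∀ᵐ s : ℝ, Radon f s φ = Radon f₀ s φ := radon_ae_eq hff₀ φ
    have hae2 : ∀ᵐ s : ℝ, Radon f (s + h) φ = Radon f₀ (s + h) φ := ae_add_right h hae1
    have e1 : (∫ s : ℝ, (Radon f (s + h) (φ + 0) - Radon f s φ) ^ 2)
        = ∫ s : ℝ, (Radon f₀ (s + h) φ - Radon f₀ s φ) ^ 2 := by
      apply integral_congr_ae
      filter_upwards [hae1, hae2] with s h1 h2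
      rw [add_zero, h1, h2]
    rw [e1]
    have hm2 : AEStronglyMeasurable (fun s : ℝ => (Radon f₀ (s + h) φ - Radon f₀ s φ) ^ 2)
        volume := by
      apply Measurable.aestronglyMeasurable
      have h1 : Measurable fun s : ℝ => Radon f₀ (s + h) φ :=
        hGm.comp (measurable_id.add measurable_const)
      exact (h1.sub hGm).pow_const 2
    rw [integral_eq_lintegral_of_nonneg_ae (ae_of_all _ fun s => sq_nonneg _) hm2]
  rw [modCont]
  congr 1
  have e2 : (∫ φ in Ioc (-π) π, ∫ s : ℝ, (Radon f (s + h) (φ + 0) - Radon f s φ) ^ 2)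
      = ∫ φ in Ioc (-π) π, (∫⁻ s : ℝ,
          ENNReal.ofReal ((Radon f₀ (s + h) φ - Radon f₀ s φ) ^ 2)).toReal :=
    integral_congr_ae (ae_of_all _ hinner)
  rw [e2, integral_toReal ((meas_Linner hfm h).aemeasurable) hae_fin]

end ModContLayer

end RadonAux

set_option maxHeartbeats 2000000
open RadonAux
open scoped ENNReal

/-- `‖R_{δ_s} f − R f‖_{L²(Ω')} ≤ C sup_{|h| < (3/2)δ_s} ω_{R f}(h, 0)`. -/
theorem radon_detector_discretization :
    ∃ C : ℝ, 0 < C ∧ ∀ (δs : ℝ) (P : ℕ), 0 < δs → CoversI δs P →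
      ∀ f : ℝ × ℝ → ℝ, SuppDisk f → L2Img f →
        nSinoD (fun s φ => RadonS δs P f s φ - Radon f s φ) ≤
          C * supMod (Radon f) (3 / 2 * δs) := by
  classical
  refine ⟨Real.sqrt 3, Real.sqrt_pos.2 (by norm_num), ?_⟩
  intro δs P hδ hcov f hsupp hL2
  have hr : (0:ℝ) < 3 / 2 * δs := by linarith
  -- measurable representative supported in the disk
  set f₀ : ℝ × ℝ → ℝ := Set.indicator unitDisk (hL2.1.mk f) with hf₀
  have hdiskM : MeasurableSet unitDisk := by
    have ho : IsOpen unitDisk := by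
      have e : unitDisk = (fun x : ℝ × ℝ => x.1 ^ 2 + x.2 ^ 2) ⁻¹' Iio 1 := rfl
      rw [e]
      exact ((continuous_fst.pow 2).add (continuous_snd.pow 2)).isOpen_preimage _ isOpen_Iio
    exact ho.measurableSet
  have hfm : Measurable f₀ := hL2.1.stronglyMeasurable_mk.measurable.indicator hdiskM
  have hff₀ : f =ᵐ[(volume : Measure (ℝ × ℝ))] f₀ := by
    filter_upwards [hL2.1.ae_eq_mk] with x hx
    by_cases hxd : x ∈ unitDisk
    · rw [hf₀, Set.indicator_of_mem hxd]; exact hx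
    · rw [hf₀, Set.indicator_of_notMem hxd]; exact hsupp x hxd
  have hsupp₀ : ∀ x, x ∉ unitDisk → f₀ x = 0 := fun x hx => Set.indicator_of_notMem hx _
  -- the sinogram is square integrable
  have hM : (∫⁻ x : ℝ × ℝ, ENNReal.ofReal (f₀ x ^ 2)) < ⊤ := by
    have h2 : (∫⁻ x : ℝ × ℝ, ENNReal.ofReal (f₀ x ^ 2))
        = ∫⁻ x : ℝ × ℝ, ENNReal.ofReal (f x ^ 2) := by
      apply lintegral_congr_ae
      filter_upwards [hff₀] with x hx
      rw [hx]
    rw [h2]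
    exact hL2.integrable_sq.lintegral_lt_top
  have hT : (∫⁻ φ in Ioc (-π) π, ∫⁻ s : ℝ, ENNReal.ofReal (Radon f₀ s φ ^ 2)) ≠ ⊤ := by
    have hb : (∫⁻ φ in Ioc (-π) π, ∫⁻ s : ℝ, ENNReal.ofReal (Radon f₀ s φ ^ 2))
        ≤ (ENNReal.ofReal 2 * ∫⁻ x : ℝ × ℝ, ENNReal.ofReal (f₀ x ^ 2)) * volume (Ioc (-π) π) := by
      calc (∫⁻ φ in Ioc (-π) π, ∫⁻ s : ℝ, ENNReal.ofReal (Radon f₀ s φ ^ 2))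
          ≤ ∫⁻ _ in Ioc (-π) π,
            ENNReal.ofReal 2 * ∫⁻ x : ℝ × ℝ, ENNReal.ofReal (f₀ x ^ 2) :=
            setLIntegral_mono measurable_const fun φ _ => radon_sq_bound hfm hsupp₀ φ
        _ = _ := setLIntegral_const _ _
    refine ne_top_of_le_ne_top ?_ hb
    refine ENNReal.mul_ne_top (ENNReal.mul_ne_top ENNReal.ofReal_ne_top hM.ne) ?_
    rw [Real.volume_Ioc]
    exact ENNReal.ofReal_ne_top
  -- the supremum S
  set S := supMod (Radon f) (3 / 2 * δs) with hSdef
  set B := ((4 : ℝ≥0∞) * ∫⁻ φ in Ioc (-π) π,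
    ∫⁻ s : ℝ, ENNReal.ofReal (Radon f₀ s φ ^ 2)).toReal ^ (1/2:ℝ) with hBdef
  have hLfin : ∀ h : ℝ, (∫⁻ φ in Ioc (-π) π, ∫⁻ s : ℝ,
      ENNReal.ofReal ((Radon f₀ (s + h) φ - Radon f₀ s φ) ^ 2)) ≠ ⊤ := fun h =>
    ne_top_of_le_ne_top (ENNReal.mul_ne_top (by norm_num) hT) (L_le hfm h)
  have hbdd : BddAbove ((fun h => modCont (Radon f) h 0) '' Ioo (-(3/2*δs)) (3/2*δs)) := by
    refine ⟨B, ?_⟩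
    rintro y ⟨h, _, rfl⟩
    show modCont (Radon f) h 0 ≤ B
    rw [modCont_eq hfm hff₀ hT h, hBdef]
    refine Real.rpow_le_rpow ENNReal.toReal_nonneg ?_ (by norm_num)
    exact ENNReal.toReal_mono (ENNReal.mul_ne_top (by norm_num) hT) (L_le hfm h)
  have hmem0 : (0:ℝ) ∈ (fun h => modCont (Radon f) h 0) '' Ioo (-(3/2*δs)) (3/2*δs) := by
    refine ⟨0, ⟨by linarith, by linarith⟩, ?_⟩
    have : modCont (Radon f) 0 0 = 0 := by
      rw [modCont]
      have e : ∀ φ s : ℝ, (Radon f (s + 0) (φ + 0) - Radon f s φ) ^ 2 = 0 := by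
        intro φ s
        rw [add_zero, add_zero, sub_self]
        ring
      simp only [e, integral_zero]
      exact Real.zero_rpow (by norm_num)
    exact this
  have hS0 : 0 ≤ S := le_csSup hbdd hmem0
  have hSle : ∀ h ∈ Ioo (-(3/2*δs)) (3/2*δs), modCont (Radon f) h 0 ≤ S :=
    fun h hh => le_csSup hbdd ⟨h, hh, rfl⟩
  have hLS : ∀ h ∈ Ioo (-(3/2*δs)) (3/2*δs),
      (∫⁻ φ in Ioc (-π) π, ∫⁻ s : ℝ,
        ENNReal.ofReal ((Radon f₀ (s + h) φ - Radon f₀ s φ) ^ 2))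
      ≤ ENNReal.ofReal (S ^ 2) := by
    intro h hh
    have e1 : modCont (Radon f) h 0 ^ 2
        = (∫⁻ φ in Ioc (-π) π, ∫⁻ s : ℝ,
            ENNReal.ofReal ((Radon f₀ (s + h) φ - Radon f₀ s φ) ^ 2)).toReal := by
      rw [modCont_eq hfm hff₀ hT h]
      rw [← Real.rpow_natCast (_ ^ (1/2:ℝ)) 2, ← Real.rpow_mul ENNReal.toReal_nonneg]
      norm_num
    calc (∫⁻ φ in Ioc (-π) π, ∫⁻ s : ℝ,
          ENNReal.ofReal ((Radon f₀ (s + h) φ - Radon f₀ s φ) ^ 2))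
        = ENNReal.ofReal (modCont (Radon f) h 0 ^ 2) := by
          rw [e1, ENNReal.ofReal_toReal (hLfin h)]
      _ ≤ ENNReal.ofReal (S ^ 2) := by
          apply ENNReal.ofReal_le_ofReal
          have hnn : 0 ≤ modCont (Radon f) h 0 := by
            rw [modCont_eq hfm hff₀ hT h]
            exact Real.rpow_nonneg ENNReal.toReal_nonneg _
          exact pow_le_pow_left₀ hnn (hSle h hh) 2
  -- main estimate in lintegral form
  set LTot := ∫⁻ φ in Ioc (-π) π, ∫⁻ s in Ioo (-1:ℝ) 1,
      ENNReal.ofReal ((RadonS δs P f s φ - Radon f s φ) ^ 2) with hLTot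
  have hmain : LTot ≤ ENNReal.ofReal (3 * S ^ 2) := by
    have hpairm : Measurable fun x : ℝ × ℝ => ∫⁻ s : ℝ,
        ENNReal.ofReal ((Radon f₀ (s + x.2) x.1 - Radon f₀ s x.1) ^ 2) :=
      (meas_diff hfm).lintegral_prod_right'
    have hZm : Measurable fun φ : ℝ => ∫⁻ h in Ioo (-(3/2*δs)) (3/2*δs), ∫⁻ s : ℝ,
        ENNReal.ofReal ((Radon f₀ (s + h) φ - Radon f₀ s φ) ^ 2) :=
      Measurable.lintegral_prod_right' (ν := volume.restrict (Ioo (-(3/2*δs)) (3/2*δs))) hpairm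
    have hinner_eq : ∀ φ : ℝ, (∫⁻ s in Ioo (-1:ℝ) 1,
        ENNReal.ofReal ((RadonS δs P f s φ - Radon f s φ) ^ 2))
        = ∫⁻ s in Ioo (-1:ℝ) 1, ENNReal.ofReal
            ((((δs ^ 2)⁻¹ * ∑ p ∈ Finset.Icc 1 P,
              Set.indicator (sCell δs P p) (fun _ => (1 : ℝ)) s *
                ∫ t : ℝ, hatw δs (t - sCen δs P p) * Radon f₀ t φ) - Radon f₀ s φ) ^ 2) := by
      intro φ
      have hRS : ∀ s : ℝ, RadonS δs P f s φ = (δs ^ 2)⁻¹ * ∑ p ∈ Finset.Icc 1 P,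
          Set.indicator (sCell δs P p) (fun _ => (1 : ℝ)) s *
            ∫ t : ℝ, hatw δs (t - sCen δs P p) * Radon f₀ t φ := by
        intro s
        rw [RadonS]
        congr 1
        refine Finset.sum_congr rfl fun p _ => ?_
        congr 1
        apply integral_congr_ae
        filter_upwards [radon_ae_eq hff₀ φ] with t ht
        rw [ht]
      apply lintegral_congr_ae
      filter_upwards [ae_restrict_of_ae (radon_ae_eq hff₀ φ)] with s h1
      rw [hRS s, h1]
    have hWae : ∀ᵐ φ ∂(volume.restrict (Ioc (-π) π)),
        (∫⁻ s : ℝ, ENNReal.ofReal (Radon f₀ s φ ^ 2)) < ⊤ :=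
      ae_lt_top (meas_W hfm) hT
    have hkey : ∀ᵐ φ ∂(volume.restrict (Ioc (-π) π)),
        (∫⁻ s in Ioo (-1:ℝ) 1,
          ENNReal.ofReal ((RadonS δs P f s φ - Radon f s φ) ^ 2))
        ≤ (ENNReal.ofReal δs)⁻¹ * ∫⁻ h in Ioo (-(3/2*δs)) (3/2*δs), ∫⁻ s : ℝ,
            ENNReal.ofReal ((Radon f₀ (s + h) φ - Radon f₀ s φ) ^ 2) := by
      filter_upwards [hWae] with φ hW
      rw [hinner_eq φ]
      exact key_phi hδ hcov
        ((measurable_radon hfm).comp (measurable_id.prodMk measurable_const)) hW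
    calc LTot ≤ ∫⁻ φ in Ioc (-π) π, (ENNReal.ofReal δs)⁻¹ *
          ∫⁻ h in Ioo (-(3/2*δs)) (3/2*δs), ∫⁻ s : ℝ,
            ENNReal.ofReal ((Radon f₀ (s + h) φ - Radon f₀ s φ) ^ 2) :=
          lintegral_mono_ae hkey
      _ = (ENNReal.ofReal δs)⁻¹ * ∫⁻ φ in Ioc (-π) π,
          ∫⁻ h in Ioo (-(3/2*δs)) (3/2*δs), ∫⁻ s : ℝ,
            ENNReal.ofReal ((Radon f₀ (s + h) φ - Radon f₀ s φ) ^ 2) :=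
          lintegral_const_mul _ hZm
      _ = (ENNReal.ofReal δs)⁻¹ * ∫⁻ h in Ioo (-(3/2*δs)) (3/2*δs),
          ∫⁻ φ in Ioc (-π) π, ∫⁻ s : ℝ,
            ENNReal.ofReal ((Radon f₀ (s + h) φ - Radon f₀ s φ) ^ 2) := by
          congr 1
          exact lintegral_lintegral_swap hpairm.aemeasurable
      _ ≤ (ENNReal.ofReal δs)⁻¹ * ∫⁻ _ in Ioo (-(3/2*δs)) (3/2*δs),
            ENNReal.ofReal (S ^ 2) := by
          apply mul_le_mul_right
          exact setLIntegral_mono measurable_const hLS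
      _ = (ENNReal.ofReal δs)⁻¹ * (ENNReal.ofReal (S ^ 2)
            * (ENNReal.ofReal 3 * ENNReal.ofReal δs)) := by
          rw [setLIntegral_const, Real.volume_Ioo]
          congr 2
          rw [← ENNReal.ofReal_mul (by norm_num)]
          congr 1
          ring
      _ = ENNReal.ofReal (3 * S ^ 2) := by
          rw [ENNReal.ofReal_mul (by norm_num : (0:ℝ) ≤ 3)]
          have hx : (ENNReal.ofReal δs)⁻¹ * ENNReal.ofReal δs = 1 :=
            ENNReal.inv_mul_cancel (by simp [ENNReal.ofReal_eq_zero, not_le, hδ])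
              ENNReal.ofReal_ne_top
          calc (ENNReal.ofReal δs)⁻¹ * (ENNReal.ofReal (S ^ 2)
                * (ENNReal.ofReal 3 * ENNReal.ofReal δs))
              = (ENNReal.ofReal 3 * ENNReal.ofReal (S ^ 2))
                * ((ENNReal.ofReal δs)⁻¹ * ENNReal.ofReal δs) := by ring
            _ = ENNReal.ofReal 3 * ENNReal.ofReal (S ^ 2) := by rw [hx, mul_one]
  -- pass from lintegral to Bochner integrals
  have hYnn : ∀ φ : ℝ, 0 ≤ ∫ s in Ioo (-1:ℝ) 1, (RadonS δs P f s φ - Radon f s φ) ^ 2 :=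
    fun φ => integral_nonneg fun s => sq_nonneg _
  have hfinal : (∫ φ in Ioc (-π) π, ∫ s in Ioo (-1:ℝ) 1,
      (RadonS δs P f s φ - Radon f s φ) ^ 2) ≤ 3 * S ^ 2 := by
    have step1 : (∫ φ in Ioc (-π) π, ∫ s in Ioo (-1:ℝ) 1,
        (RadonS δs P f s φ - Radon f s φ) ^ 2)
        ≤ (∫⁻ φ in Ioc (-π) π, ENNReal.ofReal (∫ s in Ioo (-1:ℝ) 1,
            (RadonS δs P f s φ - Radon f s φ) ^ 2)).toReal :=
      integral_le_toReal _ hYnn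
    have step2 : (∫⁻ φ in Ioc (-π) π, ENNReal.ofReal (∫ s in Ioo (-1:ℝ) 1,
        (RadonS δs P f s φ - Radon f s φ) ^ 2)) ≤ LTot := by
      refine lintegral_mono fun φ => ?_
      calc ENNReal.ofReal (∫ s in Ioo (-1:ℝ) 1, (RadonS δs P f s φ - Radon f s φ) ^ 2)
          ≤ ENNReal.ofReal ((∫⁻ s in Ioo (-1:ℝ) 1,
              ENNReal.ofReal ((RadonS δs P f s φ - Radon f s φ) ^ 2)).toReal) :=
            ENNReal.ofReal_le_ofReal (integral_le_toReal _ fun s => sq_nonneg _)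
        _ ≤ ∫⁻ s in Ioo (-1:ℝ) 1,
              ENNReal.ofReal ((RadonS δs P f s φ - Radon f s φ) ^ 2) :=
            ENNReal.ofReal_toReal_le
    have hLTfin : LTot ≠ ⊤ := ne_top_of_le_ne_top ENNReal.ofReal_ne_top hmain
    calc (∫ φ in Ioc (-π) π, ∫ s in Ioo (-1:ℝ) 1, (RadonS δs P f s φ - Radon f s φ) ^ 2)
        ≤ (∫⁻ φ in Ioc (-π) π, ENNReal.ofReal (∫ s in Ioo (-1:ℝ) 1,
            (RadonS δs P f s φ - Radon f s φ) ^ 2)).toReal := step1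
      _ ≤ LTot.toReal := ENNReal.toReal_mono hLTfin step2
      _ ≤ (ENNReal.ofReal (3 * S ^ 2)).toReal :=
          ENNReal.toReal_mono ENNReal.ofReal_ne_top hmain
      _ = 3 * S ^ 2 := ENNReal.toReal_ofReal (by positivity)
  rw [nSinoD]
  calc (∫ φ in Ioc (-π) π, ∫ s in Ioo (-1:ℝ) 1,
        (RadonS δs P f s φ - Radon f s φ) ^ 2) ^ (1/2:ℝ)
      ≤ (3 * S ^ 2) ^ (1/2:ℝ) := by
        refine Real.rpow_le_rpow ?_ hfinal (by norm_num)
        exact integral_nonneg fun φ => hYnn φ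
    _ = Real.sqrt 3 * S := by
        rw [← Real.sqrt_eq_rpow, Real.sqrt_mul (by norm_num : (0:ℝ) ≤ 3),
          Real.sqrt_sq hS0]

end
end

section
/- There exists a constant C > 0 (independent of δ_s, δ_φ and the grids) such that ‖R_{δ_s,δ_φ} − R_{δ_s}‖ ≤ C · δ_φ / δ_s, where the norm is the operator norm L²(Ω) → L²(Ω'). (The proof yields C = √(2π/3).) -/
open MeasureTheory Real Set Filter

noncomputable section

/-! Rotation machinery -/

def rotL (φ : ℝ) : (ℝ × ℝ) →ₗ[ℝ] (ℝ × ℝ) where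
  toFun p := p.1 • dirv φ + p.2 • dirp φ
  map_add' p q := by
    simp only [dirv, dirp, Prod.smul_mk, smul_eq_mul, Prod.mk_add_mk, Prod.ext_iff,
      Prod.fst_add, Prod.snd_add, Prod.smul_fst, Prod.smul_snd]
    constructor <;> ring
  map_smul' c p := by
    simp only [dirv, dirp, Prod.smul_mk, smul_eq_mul, Prod.mk_add_mk, Prod.ext_iff,
      RingHom.id_apply, Prod.smul_fst, Prod.smul_snd]
    constructor <;> ring

lemma rotL_apply (φ : ℝ) (p : ℝ × ℝ) :
    rotL φ p = (p.1 * Real.cos φ - p.2 * Real.sin φ, p.1 * Real.sin φ + p.2 * Real.cos φ) := by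
  simp only [rotL, dirv, dirp, LinearMap.coe_mk, AddHom.coe_mk, Prod.smul_mk, smul_eq_mul,
    Prod.mk_add_mk, Prod.ext_iff]
  exact ⟨by ring, trivial⟩

lemma rotL_inv_left (φ : ℝ) (p : ℝ × ℝ) : rotL φ (rotL (-φ) p) = p := by
  have h := Real.sin_sq_add_cos_sq φ
  simp only [rotL_apply, Real.cos_neg, Real.sin_neg, Prod.ext_iff]
  constructor
  · linear_combination p.1 * h
  · linear_combination p.2 * h

lemma rotL_inv_right (φ : ℝ) (p : ℝ × ℝ) : rotL (-φ) (rotL φ p) = p := by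
  have h := Real.sin_sq_add_cos_sq φ
  simp only [rotL_apply, Real.cos_neg, Real.sin_neg, Prod.ext_iff]
  constructor
  · linear_combination p.1 * h
  · linear_combination p.2 * h

def rotE (φ : ℝ) : (ℝ × ℝ) ≃ₗ[ℝ] (ℝ × ℝ) :=
  LinearEquiv.ofLinear (rotL φ) (rotL (-φ))
    (LinearMap.ext fun p => by simp [rotL_inv_left])
    (LinearMap.ext fun p => by simp [rotL_inv_right])

lemma rotL_det (φ : ℝ) : LinearMap.det (rotL φ) = 1 := by
  have h : LinearMap.toMatrix (Module.Basis.finTwoProd ℝ) (Module.Basis.finTwoProd ℝ) (rotL φ) =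
      !![Real.cos φ, -Real.sin φ; Real.sin φ, Real.cos φ] := by
    ext i j
    fin_cases i <;> fin_cases j <;>
      simp [LinearMap.toMatrix_apply, rotL, dirv, dirp, Module.Basis.finTwoProd]
  rw [← LinearMap.det_toMatrix (Module.Basis.finTwoProd ℝ), h, Matrix.det_fin_two_of]
  nlinarith [Real.sin_sq_add_cos_sq φ]

lemma rotL_mp (φ : ℝ) :
    MeasurePreserving (fun p : ℝ × ℝ => p.1 • dirv φ + p.2 • dirp φ) volume volume := by
  have hdet : LinearMap.det (rotL φ) ≠ 0 := by rw [rotL_det]; norm_num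
  have := Measure.map_linearMap_addHaar_eq_smul_addHaar (volume : Measure (ℝ × ℝ)) hdet
  rw [rotL_det] at this
  simp only [inv_one, abs_one, ENNReal.ofReal_one, one_smul] at this
  exact ⟨(rotL φ).continuous_of_finiteDimensional.measurable, this⟩

lemma rotL_emb (φ : ℝ) :
    MeasurableEmbedding (fun p : ℝ × ℝ => p.1 • dirv φ + p.2 • dirp φ) := by
  have : (fun p : ℝ × ℝ => p.1 • dirv φ + p.2 • dirp φ) = ⇑((rotE φ).toContinuousLinearEquiv.toHomeomorph) := by
    ext p : 1 <;> rfl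
  rw [this]
  exact (rotE φ).toContinuousLinearEquiv.toHomeomorph.measurableEmbedding

lemma rot_dot_v (φ s t : ℝ) : dot2 (s • dirv φ + t • dirp φ) (dirv φ) = s := by
  simp only [dot2, dirv, dirp, Prod.smul_mk, smul_eq_mul, Prod.mk_add_mk]
  linear_combination s * (Real.sin_sq_add_cos_sq φ)

lemma rot_dot_p (φ s t : ℝ) : dot2 (s • dirv φ + t • dirp φ) (dirp φ) = t := by
  simp only [dot2, dirv, dirp, Prod.smul_mk, smul_eq_mul, Prod.mk_add_mk]
  linear_combination t * (Real.sin_sq_add_cos_sq φ)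

lemma rot_recover (φ : ℝ) (x : ℝ × ℝ) :
    (dot2 x (dirv φ)) • dirv φ + (dot2 x (dirp φ)) • dirp φ = x := by
  have h := Real.sin_sq_add_cos_sq φ
  simp only [dot2, dirv, dirp, Prod.smul_mk, smul_eq_mul, Prod.mk_add_mk, Prod.ext_iff]
  constructor
  · linear_combination x.1 * h
  · linear_combination x.2 * h

/-- change of variables: integral over the plane in rotated coordinates. -/
lemma integral_rot (φ : ℝ) (g : ℝ × ℝ → ℝ) (hg : Integrable g (volume : Measure (ℝ × ℝ))) :
    ∫ x : ℝ × ℝ, g x = ∫ s : ℝ, ∫ t : ℝ, g (s • dirv φ + t • dirp φ) := by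
  have h1 : ∫ x : ℝ × ℝ, g x = ∫ p : ℝ × ℝ, g (p.1 • dirv φ + p.2 • dirp φ) :=
    ((rotL_mp φ).integral_comp (rotL_emb φ) g).symm
  have h2 : Integrable (fun p : ℝ × ℝ => g (p.1 • dirv φ + p.2 • dirp φ)) volume := by
    have := ((rotL_mp φ).integrable_comp_emb (rotL_emb φ) (g := g)).2 hg
    exact this
  rw [h1]
  rw [Measure.volume_eq_prod] at h2 ⊢
  exact MeasureTheory.integral_prod _ h2

/-! basic facts -/

lemma hatw_nonneg (δ t : ℝ) : 0 ≤ hatw δ t := le_max_left _ _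

lemma hatw_le (δ t : ℝ) (hδ : 0 ≤ δ) : hatw δ t ≤ δ := by
  simp only [hatw, max_le_iff]
  constructor
  · exact hδ
  · have := abs_nonneg t; linarith

lemma hatw_eq_zero {δ t : ℝ} (h : δ ≤ |t|) : hatw δ t = 0 := by
  simp only [hatw]
  exact max_eq_left (by linarith)

lemma hatw_lipschitz (δ a b : ℝ) : |hatw δ a - hatw δ b| ≤ |a - b| := by
  simp only [hatw]
  calc |max 0 (δ - |a|) - max 0 (δ - |b|)| ≤ |(δ - |a|) - (δ - |b|)| := by
        rw [max_comm 0 (δ - |a|), max_comm 0 (δ - |b|)]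
        exact abs_max_sub_max_le_abs _ _ _
    _ = abs (abs b - abs a) := by ring_nf
    _ ≤ |b - a| := abs_abs_sub_abs_le_abs_sub _ _
    _ = |a - b| := abs_sub_comm _ _

lemma hatw_continuous (δ : ℝ) : Continuous (hatw δ) :=
  continuous_const.max ((continuous_const.sub continuous_abs))

lemma norm_sq_unitDisk {x : ℝ × ℝ} (hx : x ∈ unitDisk) : x.1 ^ 2 + x.2 ^ 2 < 1 := hx

/-- chord bound: for `x` in the disk, `|x·θ(a) − x·θ(b)| ≤ |a − b|`. -/
lemma dot_dirv_diff_le {x : ℝ × ℝ} (hx : x ∈ unitDisk) (a b : ℝ) :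
    |dot2 x (dirv a) - dot2 x (dirv b)| ≤ |a - b| := by
  have h1 : (dot2 x (dirv a) - dot2 x (dirv b)) ^ 2 ≤
      (x.1 ^ 2 + x.2 ^ 2) * ((Real.cos a - Real.cos b) ^ 2 + (Real.sin a - Real.sin b) ^ 2) := by
    simp only [dot2, dirv]
    nlinarith [sq_nonneg (x.1 * (Real.sin a - Real.sin b) - x.2 * (Real.cos a - Real.cos b))]
  have h2 : (Real.cos a - Real.cos b) ^ 2 + (Real.sin a - Real.sin b) ^ 2 = 2 - 2 * Real.cos (a - b) := by
    have := Real.cos_sub a b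
    nlinarith [Real.sin_sq_add_cos_sq a, Real.sin_sq_add_cos_sq b]
  have h3 : 2 - 2 * Real.cos (a - b) ≤ (a - b) ^ 2 := by
    nlinarith [Real.one_sub_sq_div_two_le_cos (x := a - b)]
  have hx1 : x.1 ^ 2 + x.2 ^ 2 < 1 := hx
  have h4 : (dot2 x (dirv a) - dot2 x (dirv b)) ^ 2 ≤ (a - b) ^ 2 := by
    nlinarith [sq_nonneg (dot2 x (dirv a) - dot2 x (dirv b))]
  calc |dot2 x (dirv a) - dot2 x (dirv b)| = √((dot2 x (dirv a) - dot2 x (dirv b)) ^ 2) :=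
        (Real.sqrt_sq_eq_abs _).symm
    _ ≤ √((a - b) ^ 2) := Real.sqrt_le_sqrt h4
    _ = |a - b| := Real.sqrt_sq_eq_abs _

lemma unitDisk_measurable : MeasurableSet unitDisk := by
  have : IsOpen unitDisk := by
    have : unitDisk = (fun x : ℝ × ℝ => x.1 ^ 2 + x.2 ^ 2) ⁻¹' (Iio 1) := rfl
    rw [this]
    exact (((continuous_fst.pow 2).add (continuous_snd.pow 2))).isOpen_preimage _ isOpen_Iio
  exact this.measurableSet

lemma unitDisk_subset : unitDisk ⊆ (Ioo (-1 : ℝ) 1) ×ˢ (Ioo (-1 : ℝ) 1) := by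
  intro x hx
  have h : x.1 ^ 2 + x.2 ^ 2 < 1 := hx
  constructor
  · constructor <;> nlinarith [sq_nonneg x.1, sq_nonneg x.2]
  · constructor <;> nlinarith [sq_nonneg x.1, sq_nonneg x.2]

lemma unitDisk_vol_lt_top : volume unitDisk < ⊤ := by
  refine lt_of_le_of_lt (measure_mono unitDisk_subset) ?_
  rw [Measure.volume_eq_prod, Measure.prod_prod]
  simp [Real.volume_Ioo]
  exact ENNReal.mul_lt_top ENNReal.ofReal_lt_top ENNReal.ofReal_lt_top

/-- an `L²` function supported in the disk is integrable. -/
lemma f_integrable {f : ℝ × ℝ → ℝ} (hs : SuppDisk f) (hf : L2Img f) :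
    Integrable f (volume : Measure (ℝ × ℝ)) := by
  have h1 : IsFiniteMeasure ((volume : Measure (ℝ × ℝ)).restrict unitDisk) := by
    constructor
    rw [Measure.restrict_apply_univ]
    exact unitDisk_vol_lt_top
  have h2 : IntegrableOn f unitDisk volume :=
    MemLp.integrable (by norm_num) (hf.restrict unitDisk)
  have h3 : f = Set.indicator unitDisk f := by
    ext x
    by_cases hx : x ∈ unitDisk
    · rw [Set.indicator_of_mem hx]
    · rw [Set.indicator_of_notMem hx, hs x hx]
  rw [h3]
  rwa [integrable_indicator_iff unitDisk_measurable]

lemma f_sq_integrable {f : ℝ × ℝ → ℝ} (hf : L2Img f) :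
    Integrable (fun x => f x ^ 2) (volume : Measure (ℝ × ℝ)) := by
  have := MemLp.integrable_sq hf
  simpa [sq] using this

/-! the key identity transforming the offset-discretized Radon transform -/

lemma radonS_term_eq {f : ℝ × ℝ → ℝ} (hs : SuppDisk f) (hf : L2Img f)
    (δ a φ : ℝ) (hδ : 0 < δ) :
    ∫ t : ℝ, hatw δ (t - a) * Radon f t φ =
      ∫ x in unitDisk, hatw δ (dot2 x (dirv φ) - a) * f x := by
  have hfint : Integrable f (volume : Measure (ℝ × ℝ)) := f_integrable hs hf
  set G : ℝ × ℝ → ℝ := fun x => hatw δ (dot2 x (dirv φ) - a) * f x with hG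
  have hGint : Integrable G (volume : Measure (ℝ × ℝ)) := by
    apply hfint.bdd_mul (c := δ)
    · exact (((hatw_continuous δ).comp
        (((continuous_fst.mul continuous_const).add
          (continuous_snd.mul continuous_const)).sub continuous_const))).aestronglyMeasurable
    · refine Filter.Eventually.of_forall (fun x => ?_)
      rw [Real.norm_eq_abs, abs_of_nonneg (hatw_nonneg _ _)]
      exact hatw_le _ _ hδ.le
  have key : ∫ x : ℝ × ℝ, G x = ∫ s : ℝ, ∫ t : ℝ, G (s • dirv φ + t • dirp φ) :=
    integral_rot φ G hGint
  have hcomp : ∀ s t : ℝ, G (s • dirv φ + t • dirp φ) =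
      hatw δ (s - a) * f (s • dirv φ + t • dirp φ) := by
    intro s t
    simp only [hG, rot_dot_v]
  have step : ∫ s : ℝ, ∫ t : ℝ, G (s • dirv φ + t • dirp φ) =
      ∫ s : ℝ, hatw δ (s - a) * Radon f s φ := by
    refine integral_congr_ae (Filter.Eventually.of_forall fun s => ?_)
    simp only [hcomp]
    rw [MeasureTheory.integral_const_mul]
    rfl
  have hzero : ∀ x : ℝ × ℝ, x ∉ unitDisk → G x = 0 := by
    intro x hx
    simp [hG, hs x hx]
  rw [← MeasureTheory.setIntegral_eq_integral_of_forall_compl_eq_zero hzero] at key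
  rw [step] at key
  exact key.symm

/-! strips -/

def strip (v c r : ℝ) : Set (ℝ × ℝ) := {x | x ∈ unitDisk ∧ |dot2 x (dirv v) - c| < r}

lemma strip_measurable (v c r : ℝ) : MeasurableSet (strip v c r) := by
  have h1 : MeasurableSet {x : ℝ × ℝ | |dot2 x (dirv v) - c| < r} := by
    have : Continuous (fun x : ℝ × ℝ => |dot2 x (dirv v) - c|) := by
      apply Continuous.abs
      exact ((continuous_fst.mul continuous_const).add
        (continuous_snd.mul continuous_const)).sub continuous_const
    exact (this.isOpen_preimage (Iio r) isOpen_Iio).measurableSet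
  exact unitDisk_measurable.inter h1

lemma rotL_def (φ : ℝ) (p : ℝ × ℝ) : rotL φ p = p.1 • dirv φ + p.2 • dirp φ := rfl

lemma strip_vol (v c r : ℝ) (hr : 0 ≤ r) :
    volume (strip v c r) ≤ ENNReal.ofReal (4 * r) := by
  set R : Set (ℝ × ℝ) := (Ioo (c - r) (c + r)) ×ˢ (Ioo (-1 : ℝ) 1) with hR
  have hRm : MeasurableSet R := measurableSet_Ioo.prod measurableSet_Ioo
  have hsub : strip v c r ⊆ (fun y : ℝ × ℝ => y.1 • dirv (-v) + y.2 • dirp (-v)) ⁻¹' R := by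
    intro x hx
    obtain ⟨hxd, hxs⟩ := hx
    have hxd' : x.1 ^ 2 + x.2 ^ 2 < 1 := hxd
    have hrec : rotL v (rotL (-v) x) = x := rotL_inv_left v x
    have h1 : dot2 (rotL v (rotL (-v) x)) (dirv v) = (rotL (-v) x).1 := by
      rw [rotL_def v (rotL (-v) x)]
      exact rot_dot_v v _ _
    have h2 : dot2 (rotL v (rotL (-v) x)) (dirp v) = (rotL (-v) x).2 := by
      rw [rotL_def v (rotL (-v) x)]
      exact rot_dot_p v _ _
    rw [hrec] at h1 h2
    have hmem1 : (rotL (-v) x).1 ∈ Ioo (c - r) (c + r) := by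
      rw [← h1]
      rcases abs_lt.1 hxs with ⟨ha, hb⟩
      constructor <;> linarith
    have hmem2 : (rotL (-v) x).2 ∈ Ioo (-1 : ℝ) 1 := by
      rw [← h2]
      have hsq : (dot2 x (dirp v)) ^ 2 < 1 := by
        have hs := Real.sin_sq_add_cos_sq v
        simp only [dot2, dirp]
        nlinarith [sq_nonneg (x.1 * Real.cos v + x.2 * Real.sin v)]
      constructor <;> nlinarith [hsq]
    show rotL (-v) x ∈ R
    exact ⟨hmem1, hmem2⟩
  calc volume (strip v c r) ≤
      volume ((fun y : ℝ × ℝ => y.1 • dirv (-v) + y.2 • dirp (-v)) ⁻¹' R) :=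
        measure_mono hsub
    _ = volume R := (rotL_mp (-v)).measure_preimage hRm.nullMeasurableSet
    _ ≤ ENNReal.ofReal (4 * r) := by
        rw [hR, Measure.volume_eq_prod, Measure.prod_prod, Real.volume_Ioo, Real.volume_Ioo]
        rw [← ENNReal.ofReal_mul (by linarith)]
        apply ENNReal.ofReal_le_ofReal
        nlinarith

lemma strip_vol_lt_top (v c r : ℝ) : volume (strip v c r) < ⊤ :=
  lt_of_le_of_lt (measure_mono (fun x hx => hx.1)) unitDisk_vol_lt_top

/-! Cauchy–Schwarz -/

lemma cs_sq_le {U : Set (ℝ × ℝ)} (hU : MeasurableSet U) (hfin : volume U ≠ ⊤)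
    {f : ℝ × ℝ → ℝ} (hf : MemLp f 2 (volume : Measure (ℝ × ℝ))) :
    (∫ x in U, |f x|) ^ 2 ≤ (volume U).toReal * ∫ x in U, f x ^ 2 := by
  have hfin' : IsFiniteMeasure ((volume : Measure (ℝ × ℝ)).restrict U) := by
    constructor; rwa [Measure.restrict_apply_univ, lt_top_iff_ne_top]
  have hconj : Real.HolderConjugate 2 2 := Real.HolderConjugate.two_two
  have habs : MemLp (fun x => |f x|) (ENNReal.ofReal 2) ((volume : Measure (ℝ × ℝ)).restrict U) := by
    have := (hf.restrict U).abs
    rw [ENNReal.ofReal_ofNat]; exact this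
  have hone : MemLp (fun _ : ℝ × ℝ => (1 : ℝ)) (ENNReal.ofReal 2)
      ((volume : Measure (ℝ × ℝ)).restrict U) := by
    simpa [ENNReal.ofReal_ofNat] using (memLp_const (μ := (volume : Measure (ℝ × ℝ)).restrict U)
      (p := (2 : ENNReal)) (1 : ℝ))
  have H := MeasureTheory.integral_mul_le_Lp_mul_Lq_of_nonneg hconj
    (f := fun x => |f x|) (g := fun _ => (1 : ℝ))
    (Filter.Eventually.of_forall fun x => abs_nonneg _)
    (Filter.Eventually.of_forall fun x => zero_le_one) habs hone
  simp only [mul_one] at H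
  have h2 : ∫ x in U, |f x| ^ (2 : ℝ) = ∫ x in U, f x ^ 2 := by
    refine integral_congr_ae (Filter.Eventually.of_forall fun x => ?_)
    show |f x| ^ (2:ℝ) = f x ^ 2
    rw [Real.rpow_two, sq_abs]
  have h3 : ∫ x in U, (1 : ℝ) ^ (2 : ℝ) = (volume U).toReal := by
    simp [Measure.restrict_apply_univ, measureReal_def]
  rw [h2, h3] at H
  have hA : (0 : ℝ) ≤ ∫ x in U, f x ^ 2 := integral_nonneg fun x => sq_nonneg _
  have hB : (0 : ℝ) ≤ (volume U).toReal := ENNReal.toReal_nonneg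
  have hL : (0 : ℝ) ≤ ∫ x in U, |f x| := integral_nonneg fun x => abs_nonneg _
  calc (∫ x in U, |f x|) ^ 2 ≤
      ((∫ x in U, f x ^ 2) ^ (1/2 : ℝ) * (volume U).toReal ^ (1/2 : ℝ)) ^ 2 := by
        exact pow_le_pow_left₀ hL H 2
    _ = (volume U).toReal * ∫ x in U, f x ^ 2 := by
        rw [mul_pow, ← Real.rpow_natCast ((∫ x in U, f x ^ 2) ^ (1/2:ℝ)) 2,
          ← Real.rpow_natCast ((volume U).toReal ^ (1/2:ℝ)) 2,
          ← Real.rpow_mul hA, ← Real.rpow_mul hB]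
        norm_num
        ring

/-! counting -/

lemma count_cells {δs : ℝ} (hδs : 0 < δs) (P : ℕ) (c : ℝ) :
    ((Finset.Icc 1 P).filter (fun p => |c - sCen δs P p| < δs)).card ≤ 2 := by
  set T := (Finset.Icc 1 P).filter (fun p => |c - sCen δs P p| < δs) with hT
  by_cases hne : T.Nonempty
  · set p₀ := T.min' hne with hp₀
    have hp₀T : p₀ ∈ T := T.min'_mem hne
    have hp₀c : |c - sCen δs P p₀| < δs := (Finset.mem_filter.1 hp₀T).2
    have hsub : T ⊆ Finset.Icc p₀ (p₀ + 1) := by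
      intro p hp
      have hpc : |c - sCen δs P p| < δs := (Finset.mem_filter.1 hp).2
      have hge : p₀ ≤ p := T.min'_le p hp
      have hdiff : δs * ((p : ℝ) - (p₀ : ℝ)) < 2 * δs := by
        have h1 : sCen δs P p - sCen δs P p₀ = δs * ((p : ℝ) - (p₀ : ℝ)) := by
          simp only [sCen]; ring
        have h2 : |sCen δs P p - sCen δs P p₀| < 2 * δs := by
          calc |sCen δs P p - sCen δs P p₀|
              ≤ |c - sCen δs P p| + |c - sCen δs P p₀| := by
                have := abs_sub_abs_le_abs_sub (c - sCen δs P p₀) (c - sCen δs P p)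
                have h3 := abs_sub (c - sCen δs P p₀) (c - sCen δs P p)
                calc |sCen δs P p - sCen δs P p₀| = |(c - sCen δs P p₀) - (c - sCen δs P p)| := by
                      ring_nf
                  _ ≤ |c - sCen δs P p₀| + |c - sCen δs P p| := abs_sub _ _
                  _ = |c - sCen δs P p| + |c - sCen δs P p₀| := by ring
            _ < 2 * δs := by linarith
        rw [h1] at h2
        calc δs * ((p : ℝ) - (p₀ : ℝ)) ≤ |δs * ((p : ℝ) - (p₀ : ℝ))| := le_abs_self _
          _ < 2 * δs := h2
      have hlt : (p : ℝ) - (p₀ : ℝ) < 2 := by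
        by_contra hcon
        push_neg at hcon
        nlinarith
      have : (p : ℝ) < (p₀ : ℝ) + 2 := by linarith
      have hple : p < p₀ + 2 := by exact_mod_cast (by push_cast; linarith : (p:ℝ) < ((p₀ + 2 : ℕ) : ℝ))
      exact Finset.mem_Icc.2 ⟨hge, by omega⟩
    calc T.card ≤ (Finset.Icc p₀ (p₀ + 1)).card := Finset.card_le_card hsub
      _ = 2 := by rw [Nat.card_Icc]; omega
  · rw [Finset.not_nonempty_iff_eq_empty] at hne
    rw [hne]; simp

/-! sum of strip integrals -/

lemma sum_strip_integral_le {f : ℝ × ℝ → ℝ} (hf2 : Integrable (fun x => f x ^ 2)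
    (volume : Measure (ℝ × ℝ))) {δs : ℝ} (hδs : 0 < δs) (P : ℕ) (v : ℝ) :
    ∑ p ∈ Finset.Icc 1 P, ∫ x in strip v (sCen δs P p) δs, f x ^ 2 ≤
      2 * ∫ x : ℝ × ℝ, f x ^ 2 := by
  have hterm : ∀ p, ∫ x in strip v (sCen δs P p) δs, f x ^ 2 =
      ∫ x : ℝ × ℝ, Set.indicator (strip v (sCen δs P p) δs) (fun x => f x ^ 2) x := by
    intro p
    rw [integral_indicator (strip_measurable _ _ _)]
  have hIind : ∀ p : ℕ, Integrable
      (fun x : ℝ × ℝ => Set.indicator (strip v (sCen δs P p) δs) (fun x => f x ^ 2) x) volume :=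
    fun p => hf2.indicator (strip_measurable _ _ _)
  calc ∑ p ∈ Finset.Icc 1 P, ∫ x in strip v (sCen δs P p) δs, f x ^ 2
      = ∫ x : ℝ × ℝ, ∑ p ∈ Finset.Icc 1 P,
          Set.indicator (strip v (sCen δs P p) δs) (fun x => f x ^ 2) x := by
        simp_rw [hterm]
        exact (integral_finset_sum _ (fun p _ => hIind p)).symm
    _ ≤ ∫ x : ℝ × ℝ, 2 * f x ^ 2 := by
        apply integral_mono (integrable_finset_sum _ (fun p _ => hIind p)) (hf2.const_mul 2)
        intro x
        have hle : ∀ p ∈ Finset.Icc 1 P,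
            Set.indicator (strip v (sCen δs P p) δs) (fun x => f x ^ 2) x ≤
            (if |dot2 x (dirv v) - sCen δs P p| < δs then f x ^ 2 else 0) := by
          intro p _
          by_cases hx : x ∈ strip v (sCen δs P p) δs
          · rw [Set.indicator_of_mem hx, if_pos hx.2]
          · rw [Set.indicator_of_notMem hx]
            split
            · exact sq_nonneg _
            · exact le_refl 0
        calc (∑ p ∈ Finset.Icc 1 P,
            Set.indicator (strip v (sCen δs P p) δs) (fun x => f x ^ 2) x)
            ≤ ∑ p ∈ Finset.Icc 1 P,
              (if |dot2 x (dirv v) - sCen δs P p| < δs then f x ^ 2 else 0) :=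
              Finset.sum_le_sum hle
          _ = ((Finset.Icc 1 P).filter
              (fun p => |dot2 x (dirv v) - sCen δs P p| < δs)).card * f x ^ 2 := by
              rw [← Finset.sum_filter, Finset.sum_const, nsmul_eq_mul]
          _ ≤ 2 * f x ^ 2 := by
              apply mul_le_mul_of_nonneg_right _ (sq_nonneg _)
              exact_mod_cast count_cells hδs P (dot2 x (dirv v))
    _ = 2 * ∫ x : ℝ × ℝ, f x ^ 2 := integral_const_mul 2 _

/-! detector cells -/

lemma sCell_disjoint {δs : ℝ} (hδs : 0 < δs) (P : ℕ) {p q : ℕ} (hpq : p ≠ q) :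
    Disjoint (sCell δs P p) (sCell δs P q) := by
  have key : ∀ a b : ℕ, a < b → Disjoint (sCell δs P a) (sCell δs P b) := by
    intro a b hab
    rw [Set.disjoint_left]
    intro s hsa hsb
    have h1 : s < sCen δs P a + δs / 2 := hsa.2
    have h2 : sCen δs P b - δs / 2 ≤ s := hsb.1
    have h3 : (a : ℝ) + 1 ≤ (b : ℝ) := by exact_mod_cast hab
    have h4 : sCen δs P b - sCen δs P a = δs * ((b : ℝ) - (a : ℝ)) := by
      simp only [sCen]; ring
    nlinarith
  rcases lt_or_gt_of_ne hpq with h | h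
  · exact key p q h
  · exact (key q p h).symm

lemma sCell_vol (δs : ℝ) (hδs : 0 < δs) (P p : ℕ) : volume (sCell δs P p) = ENNReal.ofReal δs := by
  rw [sCell, Real.volume_Ico]
  congr 1
  ring

/-- square of a sum of indicator-weighted terms over disjoint cells. -/
lemma sq_sum_indicator {F : Finset ℕ} {S : ℕ → Set ℝ}
    (hd : ∀ p ∈ F, ∀ q ∈ F, p ≠ q → Disjoint (S p) (S q)) (a : ℕ → ℝ) (s : ℝ) :
    (∑ p ∈ F, Set.indicator (S p) (fun _ => (1 : ℝ)) s * a p) ^ 2 =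
      ∑ p ∈ F, Set.indicator (S p) (fun _ => (1 : ℝ)) s * a p ^ 2 := by
  by_cases h : ∃ p₀ ∈ F, s ∈ S p₀
  · obtain ⟨p₀, hp₀F, hp₀⟩ := h
    have hzero : ∀ q ∈ F, q ≠ p₀ → Set.indicator (S q) (fun _ => (1:ℝ)) s = 0 := by
      intro q hqF hq
      apply Set.indicator_of_notMem
      intro hsq
      exact (Set.disjoint_left.1 (hd q hqF p₀ hp₀F hq)) hsq hp₀
    rw [Finset.sum_eq_single p₀ (fun q hqF hq => by rw [hzero q hqF hq, zero_mul])
        (fun h => absurd hp₀F h),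
      Finset.sum_eq_single p₀ (fun q hqF hq => by rw [hzero q hqF hq, zero_mul])
        (fun h => absurd hp₀F h),
      Set.indicator_of_mem hp₀]
    ring
  · push_neg at h
    have hzero : ∀ p ∈ F, Set.indicator (S p) (fun _ => (1:ℝ)) s = 0 :=
      fun p hp => Set.indicator_of_notMem (h p hp) _
    rw [Finset.sum_eq_zero (fun p hp => by rw [hzero p hp, zero_mul]),
      Finset.sum_eq_zero (fun p hp => by rw [hzero p hp, zero_mul])]
    norm_num

/-! angular partition -/

lemma dirv_periodic (φ : ℝ) (k : ℤ) : dirv (φ + 2 * π * k) = dirv φ := by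
  have h : φ + 2 * π * k = φ + k * (2 * π) := by ring
  simp only [dirv, h, Real.cos_add_int_mul_two_pi, Real.sin_add_int_mul_two_pi]

section AngPartition

variable {Q : ℕ} {φs : ℕ → ℝ} {δφ : ℝ}

/-- the left endpoints of the angular cells. -/
private def lep (φs : ℕ → ℝ) (q : ℕ) : ℝ := (φs (q - 1) + φs q) / 2

private lemma lep_succ (q : ℕ) : lep φs (q + 1) = (φs q + φs (q + 1)) / 2 := by
  simp [lep]

private lemma angCell_eq (q : ℕ) :
    angCell φs q = {φ : ℝ | ∃ k : ℤ, φ + 2 * π * (k : ℝ) ∈ Ico (lep φs q) (lep φs (q + 1))} := by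
  rw [angCell, lep_succ]
  rfl

private lemma phi_mono (hg : AngGrid Q φs) :
    ∀ n a, 1 ≤ a → a + n ≤ Q → φs a ≤ φs (a + n) := by
  intro n
  induction n with
  | zero => intro a _ _; simp
  | succ n ih =>
      intro a ha hle
      have h1 : φs a ≤ φs (a + n) := ih a ha (by omega)
      have h2 : φs (a + n) < φs (a + n + 1) := hg.mono (a + n) (by omega) (by omega)
      rw [show a + (n + 1) = a + n + 1 by omega]
      linarith

private lemma phi_mono' (hg : AngGrid Q φs) {a b : ℕ} (ha : 1 ≤ a) (hab : a ≤ b) (hb : b ≤ Q) :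
    φs a ≤ φs b := by
  have := phi_mono hg (b - a) a ha (by omega)
  rwa [show a + (b - a) = b by omega] at this

private lemma lep_step (hg : AngGrid Q φs) {q : ℕ} (h1 : 1 ≤ q) (h2 : q ≤ Q) :
    lep φs q ≤ lep φs (q + 1) := by
  rw [lep_succ]
  have key : φs (q - 1) ≤ φs (q + 1) := by
    rcases Nat.eq_or_lt_of_le h1 with h | h
    · -- q = 1
      have hq1 : q = 1 := h.symm
      subst hq1
      simp only [Nat.sub_self]
      rw [hg.wrap0]
      rcases Nat.eq_or_lt_of_le hg.one_le with hQ | hQ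
      · -- Q = 1
        have h2 : (1 + 1 : ℕ) = Q + 1 := by omega
        rw [h2, hg.wrapQ, ← hQ]
        have := Real.pi_pos
        linarith
      · -- Q ≥ 2
        have hm2 : φs 2 ∈ Ico (-π) π := hg.mem 2 (by omega) (by omega)
        have hmQ : φs Q ∈ Ico (-π) π := hg.mem Q hg.one_le (le_refl Q)
        have := Real.pi_pos
        have := hm2.1
        have := hmQ.2
        linarith
    · -- q ≥ 2
      rcases Nat.eq_or_lt_of_le h2 with hQ | hQ
      · -- q = Q
        subst hQ
        rw [hg.wrapQ]
        have hm1 : φs (q - 1) ∈ Ico (-π) π := hg.mem (q - 1) (by omega) (by omega)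
        have hm2 : φs 1 ∈ Ico (-π) π := hg.mem 1 (le_refl 1) hg.one_le
        have := Real.pi_pos
        have := hm1.2
        have := hm2.1
        linarith
      · -- q < Q
        have ha : φs (q - 1) ≤ φs q := by
          have := phi_mono' hg (a := q - 1) (b := q) (by omega) (by omega) (by omega)
          exact this
        have hb : φs q < φs (q + 1) := hg.mono q h1 hQ
        linarith
  have : lep φs q = (φs (q - 1) + φs q) / 2 := rfl
  rw [this]
  linarith

private lemma lep_mono (hg : AngGrid Q φs) :
    ∀ n a, 1 ≤ a → a + n ≤ Q + 1 → lep φs a ≤ lep φs (a + n) := by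
  intro n
  induction n with
  | zero => intro a _ _; simp
  | succ n ih =>
      intro a ha hle
      have h1 : lep φs a ≤ lep φs (a + n) := ih a ha (by omega)
      have h2 : lep φs (a + n) ≤ lep φs (a + n + 1) := lep_step hg (by omega) (by omega)
      rw [show a + (n + 1) = a + n + 1 by omega]
      linarith

private lemma lep_mono' (hg : AngGrid Q φs) {a b : ℕ} (ha : 1 ≤ a) (hab : a ≤ b)
    (hb : b ≤ Q + 1) : lep φs a ≤ lep φs b := by
  have := lep_mono hg (b - a) a ha (by omega)
  rwa [show a + (b - a) = b by omega] at this

private lemma lep_top (hg : AngGrid Q φs) : lep φs (Q + 1) = lep φs 1 + 2 * π := by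
  rw [lep_succ, lep, hg.wrapQ, hg.wrap0]
  norm_num
  ring

/-- main angular partition lemma. -/
lemma ang_partition (hg : AngGrid Q φs) (hgap : GapLe Q φs δφ) (φ : ℝ) :
    ∃ q₀ ∈ Finset.Icc 1 Q, ∃ ψ : ℝ, dirv ψ = dirv φ ∧ |ψ - φs q₀| ≤ δφ / 2 ∧
      φ ∈ angCell φs q₀ ∧ ∀ q ∈ Finset.Icc 1 Q, q ≠ q₀ → φ ∉ angCell φs q := by
  have hπ := Real.pi_pos
  set k₀ : ℤ := ⌈(lep φs 1 - φ) / (2 * π)⌉ with hk₀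
  set ψ : ℝ := φ + 2 * π * (k₀ : ℝ) with hψ
  have hψ1 : lep φs 1 ≤ ψ := by
    have := Int.le_ceil ((lep φs 1 - φ) / (2 * π))
    rw [← hk₀] at this
    have h2 : (lep φs 1 - φ) / (2 * π) * (2 * π) ≤ (k₀ : ℝ) * (2 * π) :=
      mul_le_mul_of_nonneg_right this (by linarith)
    rw [div_mul_cancel₀ _ (by linarith : 2 * π ≠ 0)] at h2
    simp only [hψ]; linarith
  have hψ2 : ψ < lep φs 1 + 2 * π := by
    have := Int.ceil_lt_add_one ((lep φs 1 - φ) / (2 * π))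
    rw [← hk₀] at this
    have h2 : (k₀ : ℝ) * (2 * π) < ((lep φs 1 - φ) / (2 * π) + 1) * (2 * π) :=
      mul_lt_mul_of_pos_right this (by linarith)
    rw [add_mul, div_mul_cancel₀ _ (by linarith : 2 * π ≠ 0)] at h2
    simp only [hψ]; linarith
  -- the cell index
  set T : Finset ℕ := (Finset.Icc 1 Q).filter (fun q => lep φs q ≤ ψ) with hT
  have hTne : T.Nonempty := ⟨1, Finset.mem_filter.2 ⟨Finset.mem_Icc.2 ⟨le_refl 1, hg.one_le⟩, hψ1⟩⟩
  set q₀ : ℕ := T.max' hTne with hq₀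
  have hq₀T : q₀ ∈ T := T.max'_mem hTne
  have hq₀I : q₀ ∈ Finset.Icc 1 Q := (Finset.mem_filter.1 hq₀T).1
  obtain ⟨hq₀1, hq₀Q⟩ := Finset.mem_Icc.1 hq₀I
  have hψl : lep φs q₀ ≤ ψ := (Finset.mem_filter.1 hq₀T).2
  have hψr : ψ < lep φs (q₀ + 1) := by
    rcases Nat.eq_or_lt_of_le hq₀Q with h | h
    · rw [h, lep_top hg]; exact hψ2
    · by_contra hcon
      push_neg at hcon
      have : q₀ + 1 ∈ T := Finset.mem_filter.2 ⟨Finset.mem_Icc.2 ⟨by omega, by omega⟩, hcon⟩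
      have := T.le_max' (q₀ + 1) this
      omega
  -- gap bounds
  have hgap_left : φs q₀ - φs (q₀ - 1) ≤ δφ := by
    rcases Nat.eq_or_lt_of_le hq₀1 with h | h
    · rw [← h]
      simp only [Nat.sub_self]
      rw [hg.wrap0]
      have := hgap Q hg.one_le (le_refl Q)
      rw [hg.wrapQ] at this
      rw [show φs 1 = φs (0+1) by norm_num] at this ⊢
      linarith
    · have := hgap (q₀ - 1) (by omega) (by omega)
      rwa [show q₀ - 1 + 1 = q₀ by omega] at this
  have hgap_right : φs (q₀ + 1) - φs q₀ ≤ δφ := hgap q₀ hq₀1 hq₀Q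
  have habs : |ψ - φs q₀| ≤ δφ / 2 := by
    rw [abs_le]
    constructor
    · have : lep φs q₀ = (φs (q₀ - 1) + φs q₀) / 2 := rfl
      rw [this] at hψl
      linarith
    · rw [lep_succ] at hψr
      linarith
  -- membership
  have hmem : φ ∈ angCell φs q₀ := by
    rw [angCell_eq]
    exact ⟨k₀, hψl, hψr⟩
  -- uniqueness
  refine ⟨q₀, hq₀I, ψ, dirv_periodic φ k₀, habs, hmem, ?_⟩
  intro q hqI hqne hqmem
  obtain ⟨hq1, hqQ⟩ := Finset.mem_Icc.1 hqI
  rw [angCell_eq] at hqmem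
  obtain ⟨k, hk1, hk2⟩ := hqmem
  set ψ' : ℝ := φ + 2 * π * (k : ℝ) with hψ'
  have hb1 : lep φs 1 ≤ ψ' := le_trans (lep_mono' hg (le_refl 1) hq1 (by omega)) hk1
  have hb2 : ψ' < lep φs 1 + 2 * π := by
    have h1 : lep φs (q + 1) ≤ lep φs (Q + 1) := lep_mono' hg (by omega) (by omega) (le_refl _)
    rw [lep_top hg] at h1
    linarith
  have hkk : k = k₀ := by
    have h1 : 2 * π * ((k : ℝ) - (k₀ : ℝ)) = ψ' - ψ := by simp only [hψ', hψ]; ring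
    have h2 : ψ' - ψ < 2 * π := by linarith
    have h3 : -(2 * π) < ψ' - ψ := by linarith
    rw [← h1] at h2 h3
    have h4 : (k : ℝ) - (k₀ : ℝ) < 1 := by nlinarith
    have h5 : (-1 : ℝ) < (k : ℝ) - (k₀ : ℝ) := by nlinarith
    have : (k : ℝ) = (k₀ : ℝ) := by
      have hi1 : k < k₀ + 1 := by exact_mod_cast (by push_cast; linarith : (k : ℝ) < (k₀ : ℝ) + 1)
      have hi2 : k₀ - 1 < k := by exact_mod_cast (by push_cast; linarith : (k₀ : ℝ) - 1 < (k : ℝ))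
      have : k = k₀ := by omega
      exact_mod_cast congrArg (Int.cast : ℤ → ℝ) this
    exact_mod_cast this
  have hψeq : ψ' = ψ := by rw [hψ', hψ, hkk]
  rcases Nat.lt_or_ge q q₀ with h | h
  · have : lep φs (q + 1) ≤ lep φs q₀ := lep_mono' hg (by omega) (by omega) (by omega)
    rw [hψeq] at hk2
    linarith
  · have hqgt : q₀ < q := by omega
    have : lep φs (q₀ + 1) ≤ lep φs q := lep_mono' hg (by omega) (by omega) (by omega)
    rw [hψeq] at hk1
    linarith

end AngPartition

/-! the main per-angle bound -/

lemma hat_mul_f_integrableOn {f : ℝ × ℝ → ℝ} (hf : Integrable f (volume : Measure (ℝ × ℝ)))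
    {δs : ℝ} (hδs : 0 < δs) (v c : ℝ) {U : Set (ℝ × ℝ)} :
    IntegrableOn (fun x => hatw δs (dot2 x (dirv v) - c) * f x) U volume := by
  apply Integrable.bdd_mul (c := δs) hf.integrableOn
  · exact (((hatw_continuous δs).comp
      (((continuous_fst.mul continuous_const).add
        (continuous_snd.mul continuous_const)).sub continuous_const))).aestronglyMeasurable
  · refine Filter.Eventually.of_forall (fun x => ?_)
    rw [Real.norm_eq_abs, abs_of_nonneg (hatw_nonneg _ _)]
    exact hatw_le _ _ hδs.le

lemma per_phi_bound {δs δφ : ℝ} {P Q : ℕ} {φs : ℕ → ℝ} (hδs : 0 < δs) (hδφ : 0 < δφ)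
    (hg : AngGrid Q φs) (hgap : GapLe Q φs δφ) {f : ℝ × ℝ → ℝ} (hsupp : SuppDisk f)
    (hf : L2Img f) (φ : ℝ) :
    ∫ s in Ioo (-1 : ℝ) 1, (RadonSA δs P Q φs f s φ - RadonS δs P f s φ) ^ 2 ≤
      8 * δφ ^ 2 / δs ^ 2 * ∫ x : ℝ × ℝ, f x ^ 2 := by
  have hfint : Integrable f (volume : Measure (ℝ × ℝ)) := f_integrable hsupp hf
  have hf2 : Integrable (fun x => f x ^ 2) (volume : Measure (ℝ × ℝ)) := f_sq_integrable hf
  set I : ℝ := ∫ x : ℝ × ℝ, f x ^ 2 with hI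
  have hI0 : 0 ≤ I := integral_nonneg fun x => sq_nonneg _
  obtain ⟨q₀, hq₀I, ψ, hdir, habs, hmem, huniq⟩ := ang_partition hg hgap φ
  set v₀ : ℝ := φs q₀ with hv₀
  set A : ℕ → ℝ := fun p => ∫ x in unitDisk, hatw δs (dot2 x (dirv v₀) - sCen δs P p) * f x
    with hA
  set B : ℕ → ℝ := fun p => ∫ x in unitDisk, hatw δs (dot2 x (dirv ψ) - sCen δs P p) * f x
    with hB
  set E : ℕ → ℝ := fun p => A p - B p with hE
  -- step A : pointwise description of the difference
  have hD : ∀ s : ℝ, RadonSA δs P Q φs f s φ - RadonS δs P f s φ =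
      (δs ^ 2)⁻¹ * ∑ p ∈ Finset.Icc 1 P,
        Set.indicator (sCell δs P p) (fun _ => (1 : ℝ)) s * E p := by
    intro s
    have hSA : RadonSA δs P Q φs f s φ = (δs ^ 2)⁻¹ * ∑ p ∈ Finset.Icc 1 P,
        Set.indicator (sCell δs P p) (fun _ => (1 : ℝ)) s * A p := by
      rw [RadonSA]
      congr 1
      rw [Finset.sum_eq_single q₀ (fun q hq hne => Finset.sum_eq_zero (fun p _ => by
          rw [Set.indicator_of_notMem (huniq q hq hne)]; ring))
        (fun h => absurd hq₀I h)]
      refine Finset.sum_congr rfl (fun p _ => ?_)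
      rw [Set.indicator_of_mem hmem]
      ring
    have hS : RadonS δs P f s φ = (δs ^ 2)⁻¹ * ∑ p ∈ Finset.Icc 1 P,
        Set.indicator (sCell δs P p) (fun _ => (1 : ℝ)) s * B p := by
      rw [RadonS]
      congr 1
      refine Finset.sum_congr rfl (fun p _ => ?_)
      rw [radonS_term_eq hsupp hf δs (sCen δs P p) φ hδs, ← hdir]
    rw [hSA, hS, ← mul_sub, ← Finset.sum_sub_distrib]
    congr 1
    refine Finset.sum_congr rfl (fun p _ => ?_)
    rw [← mul_sub]
  -- step B+C : bound on E p
  have hEbound : ∀ p : ℕ, E p ^ 2 ≤ 2 * δs * δφ ^ 2 *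
      ((∫ x in strip v₀ (sCen δs P p) δs, f x ^ 2) +
       (∫ x in strip ψ (sCen δs P p) δs, f x ^ 2)) := by
    intro p
    set c : ℝ := sCen δs P p with hc
    set SA : Set (ℝ × ℝ) := strip v₀ c δs with hSA'
    set SB : Set (ℝ × ℝ) := strip ψ c δs with hSB'
    set U : Set (ℝ × ℝ) := SA ∪ SB with hU
    have hUm : MeasurableSet U := (strip_measurable _ _ _).union (strip_measurable _ _ _)
    have hUsub : U ⊆ unitDisk := by
      rintro x (hx | hx) <;> exact hx.1
    have hUfin : volume U < ⊤ :=
      lt_of_le_of_lt (measure_mono hUsub) unitDisk_vol_lt_top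
    set Δ : ℝ × ℝ → ℝ := fun x =>
      hatw δs (dot2 x (dirv v₀) - c) - hatw δs (dot2 x (dirv ψ) - c) with hΔ
    have hEint : E p = ∫ x in unitDisk, Δ x * f x := by
      rw [hE]
      simp only [hA, hB]
      rw [← integral_sub (hat_mul_f_integrableOn hfint hδs v₀ c)
        (hat_mul_f_integrableOn hfint hδs ψ c)]
      refine integral_congr_ae (Filter.Eventually.of_forall fun x => ?_)
      simp only [hΔ]
      ring
    have hEU : E p = ∫ x in U, Δ x * f x := by
      rw [hEint]
      have hcongr : EqOn (fun x => Δ x * f x)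
          (fun x => Set.indicator U (fun x => Δ x * f x) x) unitDisk := by
        intro x hx
        show Δ x * f x = U.indicator (fun x => Δ x * f x) x
        by_cases hxU : x ∈ U
        · rw [Set.indicator_of_mem hxU]
        · rw [Set.indicator_of_notMem hxU]
          have h1 : hatw δs (dot2 x (dirv v₀) - c) = 0 := by
            apply hatw_eq_zero
            by_contra hcon
            push_neg at hcon
            exact hxU (Or.inl ⟨hx, hcon⟩)
          have h2 : hatw δs (dot2 x (dirv ψ) - c) = 0 := by
            apply hatw_eq_zero
            by_contra hcon
            push_neg at hcon
            exact hxU (Or.inr ⟨hx, hcon⟩)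
          simp only [hΔ, h1, h2]
          ring
      rw [setIntegral_congr_fun unitDisk_measurable hcongr, setIntegral_indicator hUm,
        Set.inter_eq_self_of_subset_right hUsub]
    -- |Δ| ≤ δφ / 2 on U
    have hΔb : ∀ x ∈ U, |Δ x| ≤ δφ / 2 := by
      intro x hxU
      have hxd : x ∈ unitDisk := hUsub hxU
      calc |Δ x| ≤ |(dot2 x (dirv v₀) - c) - (dot2 x (dirv ψ) - c)| :=
            hatw_lipschitz δs _ _
        _ = |dot2 x (dirv v₀) - dot2 x (dirv ψ)| := by ring_nf
        _ ≤ |v₀ - ψ| := dot_dirv_diff_le hxd v₀ ψ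
        _ = |ψ - v₀| := abs_sub_comm _ _
        _ ≤ δφ / 2 := habs
    have hΔfint : IntegrableOn (fun x => Δ x * f x) U volume := by
      apply Integrable.bdd_mul (c := 2 * δs) hfint.integrableOn
      · have hcont : Continuous Δ := by
          apply Continuous.sub <;>
          exact (hatw_continuous δs).comp
            (((continuous_fst.mul continuous_const).add
              (continuous_snd.mul continuous_const)).sub continuous_const)
        exact hcont.aestronglyMeasurable
      · refine Filter.Eventually.of_forall (fun x => ?_)
        rw [Real.norm_eq_abs]
        have h1 : |hatw δs (dot2 x (dirv v₀) - c)| ≤ δs := by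
          rw [abs_of_nonneg (hatw_nonneg _ _)]; exact hatw_le _ _ hδs.le
        have h2 : |hatw δs (dot2 x (dirv ψ) - c)| ≤ δs := by
          rw [abs_of_nonneg (hatw_nonneg _ _)]; exact hatw_le _ _ hδs.le
        calc |Δ x| ≤ |hatw δs (dot2 x (dirv v₀) - c)| + |hatw δs (dot2 x (dirv ψ) - c)| :=
              abs_sub _ _
          _ ≤ 2 * δs := by linarith
    have hnint : IntegrableOn (fun x => |Δ x| * |f x|) U volume := by
      apply hΔfint.norm.congr
      refine Filter.Eventually.of_forall fun x => ?_
      simp [Real.norm_eq_abs, abs_mul]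
    have hEabs : |E p| ≤ δφ / 2 * ∫ x in U, |f x| := by
      rw [hEU]
      calc |∫ x in U, Δ x * f x| ≤ ∫ x in U, |Δ x| * |f x| := by
            have := norm_integral_le_integral_norm (μ := volume.restrict U)
              (f := fun x => Δ x * f x)
            simpa [Real.norm_eq_abs, abs_mul] using this
        _ ≤ ∫ x in U, δφ / 2 * |f x| := by
            apply setIntegral_mono_on hnint
              ((hfint.norm.const_mul (δφ / 2)).integrableOn) hUm
            intro x hxU
            exact mul_le_mul_of_nonneg_right (hΔb x hxU) (abs_nonneg _)
        _ = δφ / 2 * ∫ x in U, |f x| := integral_const_mul _ _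
    have hfabs0 : (0 : ℝ) ≤ ∫ x in U, |f x| := integral_nonneg fun x => abs_nonneg _
    have hcs : (∫ x in U, |f x|) ^ 2 ≤ (volume U).toReal * ∫ x in U, f x ^ 2 :=
      cs_sq_le hUm hUfin.ne hf
    have hvol : (volume U).toReal ≤ 8 * δs := by
      have h1 : volume U ≤ ENNReal.ofReal (8 * δs) := by
        calc volume U ≤ volume SA + volume SB := measure_union_le _ _
          _ ≤ ENNReal.ofReal (4 * δs) + ENNReal.ofReal (4 * δs) :=
            add_le_add (strip_vol _ _ _ hδs.le) (strip_vol _ _ _ hδs.le)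
          _ = ENNReal.ofReal (8 * δs) := by
            rw [← ENNReal.ofReal_add (by linarith) (by linarith)]
            congr 1; ring
      exact ENNReal.toReal_le_of_le_ofReal (by linarith) h1
    have hUsq : ∫ x in U, f x ^ 2 ≤
        (∫ x in SA, f x ^ 2) + (∫ x in SB, f x ^ 2) := by
      rw [hU]
      have hindA : Integrable (Set.indicator SA (fun x => f x ^ 2)) volume :=
        hf2.indicator (strip_measurable _ _ _)
      have hindB : Integrable (Set.indicator SB (fun x => f x ^ 2)) volume :=
        hf2.indicator (strip_measurable _ _ _)
      have hindU : Integrable (Set.indicator (SA ∪ SB) (fun x => f x ^ 2)) volume :=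
        hf2.indicator ((strip_measurable _ _ _).union (strip_measurable _ _ _))
      rw [← integral_indicator ((strip_measurable _ _ _).union (strip_measurable _ _ _)),
        ← integral_indicator (strip_measurable _ _ _),
        ← integral_indicator (strip_measurable _ _ _), ← integral_add hindA hindB]
      apply integral_mono hindU (hindA.add hindB)
      intro x
      by_cases hxA : x ∈ SA
      · have hxU : x ∈ SA ∪ SB := Set.mem_union_left _ hxA
        simp only [Pi.add_apply]
        rw [Set.indicator_of_mem hxU, Set.indicator_of_mem hxA]
        have : (0:ℝ) ≤ Set.indicator SB (fun x => f x ^ 2) x :=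
          Set.indicator_nonneg (fun y _ => sq_nonneg _) x
        linarith
      · by_cases hxB : x ∈ SB
        · have hxU : x ∈ SA ∪ SB := Set.mem_union_right _ hxB
          simp only [Pi.add_apply]
          rw [Set.indicator_of_mem hxU, Set.indicator_of_mem hxB]
          have : (0:ℝ) ≤ Set.indicator SA (fun x => f x ^ 2) x :=
            Set.indicator_nonneg (fun y _ => sq_nonneg _) x
          linarith
        · have hxU : x ∉ SA ∪ SB := fun h => h.elim hxA hxB
          rw [Set.indicator_of_notMem hxU]
          simp only [Pi.add_apply]
          have h1 : (0:ℝ) ≤ Set.indicator SA (fun x => f x ^ 2) x :=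
            Set.indicator_nonneg (fun y _ => sq_nonneg _) x
          have h2 : (0:ℝ) ≤ Set.indicator SB (fun x => f x ^ 2) x :=
            Set.indicator_nonneg (fun y _ => sq_nonneg _) x
          linarith
    have hUsq0 : (0:ℝ) ≤ ∫ x in U, f x ^ 2 := integral_nonneg fun x => sq_nonneg _
    calc E p ^ 2 = |E p| ^ 2 := (sq_abs _).symm
      _ ≤ (δφ / 2 * ∫ x in U, |f x|) ^ 2 :=
          pow_le_pow_left₀ (abs_nonneg _) hEabs 2
      _ = (δφ / 2) ^ 2 * (∫ x in U, |f x|) ^ 2 := by ring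
      _ ≤ (δφ / 2) ^ 2 * ((volume U).toReal * ∫ x in U, f x ^ 2) := by
          apply mul_le_mul_of_nonneg_left hcs (sq_nonneg _)
      _ ≤ (δφ / 2) ^ 2 * ((8 * δs) * ∫ x in U, f x ^ 2) := by
          apply mul_le_mul_of_nonneg_left _ (sq_nonneg _)
          exact mul_le_mul_of_nonneg_right hvol hUsq0
      _ ≤ (δφ / 2) ^ 2 * ((8 * δs) *
            ((∫ x in SA, f x ^ 2) + (∫ x in SB, f x ^ 2))) := by
          apply mul_le_mul_of_nonneg_left _ (sq_nonneg _)
          apply mul_le_mul_of_nonneg_left hUsq (by linarith)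
      _ = 2 * δs * δφ ^ 2 * ((∫ x in SA, f x ^ 2) + (∫ x in SB, f x ^ 2)) := by ring
  -- step D : integrate over s
  have hEsum : ∑ p ∈ Finset.Icc 1 P, E p ^ 2 ≤ 8 * δs * δφ ^ 2 * I := by
    calc ∑ p ∈ Finset.Icc 1 P, E p ^ 2 ≤ ∑ p ∈ Finset.Icc 1 P, 2 * δs * δφ ^ 2 *
        ((∫ x in strip v₀ (sCen δs P p) δs, f x ^ 2) +
         (∫ x in strip ψ (sCen δs P p) δs, f x ^ 2)) :=
          Finset.sum_le_sum (fun p _ => hEbound p)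
      _ = 2 * δs * δφ ^ 2 * ((∑ p ∈ Finset.Icc 1 P, ∫ x in strip v₀ (sCen δs P p) δs, f x ^ 2) +
          (∑ p ∈ Finset.Icc 1 P, ∫ x in strip ψ (sCen δs P p) δs, f x ^ 2)) := by
          rw [← Finset.mul_sum, ← Finset.sum_add_distrib]
      _ ≤ 2 * δs * δφ ^ 2 * (2 * I + 2 * I) := by
          apply mul_le_mul_of_nonneg_left _ (by positivity)
          exact add_le_add (sum_strip_integral_le hf2 hδs P v₀) (sum_strip_integral_le hf2 hδs P ψ)
      _ = 8 * δs * δφ ^ 2 * I := by ring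
  -- the integrand as a function of s
  set g : ℝ → ℝ := fun s => ((δs ^ 2)⁻¹) ^ 2 * ∑ p ∈ Finset.Icc 1 P,
      Set.indicator (sCell δs P p) (fun _ => (1 : ℝ)) s * E p ^ 2 with hg'
  have hDsq : ∀ s : ℝ, (RadonSA δs P Q φs f s φ - RadonS δs P f s φ) ^ 2 = g s := by
    intro s
    rw [hD s, mul_pow, sq_sum_indicator (fun p _ q _ hpq => sCell_disjoint hδs P hpq) E s]
  have hterm : ∀ (p : ℕ) (s : ℝ), Set.indicator (sCell δs P p) (fun _ => (1:ℝ)) s * E p ^ 2 =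
      Set.indicator (sCell δs P p) (fun _ => E p ^ 2) s := by
    intro p s
    by_cases hs : s ∈ sCell δs P p
    · rw [Set.indicator_of_mem hs, Set.indicator_of_mem hs]; ring
    · rw [Set.indicator_of_notMem hs, Set.indicator_of_notMem hs]; ring
  have hsCell_fin : ∀ p : ℕ, volume (sCell δs P p) < ⊤ := by
    intro p
    rw [sCell_vol δs hδs]
    exact ENNReal.ofReal_lt_top
  have htermint : ∀ p : ℕ, Integrable (Set.indicator (sCell δs P p) (fun _ : ℝ => E p ^ 2))
      volume := by
    intro p
    rw [integrable_indicator_iff (show MeasurableSet (sCell δs P p) from measurableSet_Ico)]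
    exact integrableOn_const (hsCell_fin p).ne
  have hgint : Integrable g volume := by
    rw [hg']
    apply Integrable.const_mul
    simp_rw [hterm]
    exact integrable_finset_sum _ (fun p _ => htermint p)
  have hgnonneg : ∀ s : ℝ, 0 ≤ g s := by
    intro s
    apply mul_nonneg (sq_nonneg _)
    apply Finset.sum_nonneg
    intro p _
    apply mul_nonneg _ (sq_nonneg _)
    exact Set.indicator_nonneg (fun _ _ => zero_le_one) s
  have hgtot : ∫ s : ℝ, g s = ((δs ^ 2)⁻¹) ^ 2 * δs * ∑ p ∈ Finset.Icc 1 P, E p ^ 2 := by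
    rw [hg', integral_const_mul]
    simp_rw [hterm]
    rw [integral_finset_sum _ (fun p _ => htermint p)]
    have : ∀ p ∈ Finset.Icc 1 P, ∫ s : ℝ, Set.indicator (sCell δs P p) (fun _ => E p ^ 2) s =
        δs * E p ^ 2 := by
      intro p _
      rw [MeasureTheory.integral_indicator_const (E p ^ 2)
          (show MeasurableSet (sCell δs P p) from measurableSet_Ico), measureReal_def, sCell_vol δs hδs,
        ENNReal.toReal_ofReal hδs.le, smul_eq_mul]
    rw [Finset.sum_congr rfl this, ← Finset.mul_sum]
    ring
  calc ∫ s in Ioo (-1 : ℝ) 1, (RadonSA δs P Q φs f s φ - RadonS δs P f s φ) ^ 2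
      = ∫ s in Ioo (-1 : ℝ) 1, g s := by
        refine setIntegral_congr_fun measurableSet_Ioo (fun s _ => hDsq s)
    _ ≤ ∫ s : ℝ, g s := setIntegral_le_integral hgint
        (Filter.Eventually.of_forall hgnonneg)
    _ = ((δs ^ 2)⁻¹) ^ 2 * δs * ∑ p ∈ Finset.Icc 1 P, E p ^ 2 := hgtot
    _ ≤ ((δs ^ 2)⁻¹) ^ 2 * δs * (8 * δs * δφ ^ 2 * I) := by
        apply mul_le_mul_of_nonneg_left hEsum (by positivity)
    _ = 8 * δφ ^ 2 / δs ^ 2 * I := by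
        field_simp

/-- `‖R_{δ_s,δ_φ} − R_{δ_s}‖ ≤ C δ_φ / δ_s` in the operator norm
`L²(Ω) → L²(Ω')`. -/

theorem radon_angular_discretization :
    ∃ C : ℝ, 0 < C ∧ ∀ (δs δφ : ℝ) (P Q : ℕ) (φs : ℕ → ℝ),
      0 < δs → 0 < δφ → CoversI δs P → AngGrid Q φs → GapLe Q φs δφ →
      ∀ f : ℝ × ℝ → ℝ, SuppDisk f → L2Img f →
        nSinoD (fun s φ => RadonSA δs P Q φs f s φ - RadonS δs P f s φ) ≤
          C * (δφ / δs) * nImg f := by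
  have hπ := Real.pi_pos
  refine ⟨4 * Real.sqrt π, by positivity, ?_⟩
  intro δs δφ P Q φs hδs hδφ _hcov hg hgap f hsupp hf
  set I : ℝ := ∫ x : ℝ × ℝ, f x ^ 2 with hI
  have hI0 : 0 ≤ I := integral_nonneg fun x => sq_nonneg _
  set D : ℝ → ℝ → ℝ := fun s φ => RadonSA δs P Q φs f s φ - RadonS δs P f s φ with hD
  set Bnd : ℝ := 8 * δφ ^ 2 / δs ^ 2 * I with hBnd
  have hBnd0 : 0 ≤ Bnd := by positivity
  have hinner : ∀ φ : ℝ, ∫ s in Ioo (-1 : ℝ) 1, D s φ ^ 2 ≤ Bnd := fun φ =>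
    per_phi_bound hδs hδφ hg hgap hsupp hf φ
  have hinner0 : ∀ φ : ℝ, 0 ≤ ∫ s in Ioo (-1 : ℝ) 1, D s φ ^ 2 := fun φ =>
    setIntegral_nonneg measurableSet_Ioo (fun s _ => sq_nonneg _)
  set J : ℝ := ∫ φ in Ioc (-π) π, ∫ s in Ioo (-1 : ℝ) 1, D s φ ^ 2 with hJ
  have hJ0 : 0 ≤ J := setIntegral_nonneg measurableSet_Ioc (fun φ _ => hinner0 φ)
  have houter : J ≤ Bnd * (2 * π) := by
    have hvol : volume (Ioc (-π) π) < ⊤ := measure_Ioc_lt_top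
    have hb := norm_setIntegral_le_of_norm_le_const (μ := volume) hvol
      (C := Bnd) (f := fun φ => ∫ s in Ioo (-1 : ℝ) 1, D s φ ^ 2) (fun φ _ => by
        rw [Real.norm_eq_abs, abs_of_nonneg (hinner0 φ)]; exact hinner φ)
    calc J ≤ ‖J‖ := le_abs_self _
      _ ≤ Bnd * (volume (Ioc (-π) π)).toReal := hb
      _ = Bnd * (2 * π) := by
          rw [Real.volume_Ioc, ENNReal.toReal_ofReal (by linarith)]
          ring_nf
  set R : ℝ := 4 * Real.sqrt π * (δφ / δs) with hR
  have hR0 : 0 ≤ R := by positivity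
  have hRsq : Bnd * (2 * π) = R ^ 2 * I := by
    have h1 : R ^ 2 = 16 * π * δφ ^ 2 / δs ^ 2 := by
      rw [hR, mul_pow, mul_pow, div_pow, Real.sq_sqrt hπ.le]
      ring
    rw [h1, hBnd]
    ring
  have hfinal : J ≤ R ^ 2 * I := by rw [← hRsq]; exact houter
  have hstep : nSinoD D = J ^ (1/2 : ℝ) := rfl
  calc nSinoD D = J ^ (1/2 : ℝ) := hstep
    _ ≤ (R ^ 2 * I) ^ (1/2 : ℝ) := Real.rpow_le_rpow hJ0 hfinal (by norm_num)
    _ = R * I ^ (1/2 : ℝ) := by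
        rw [Real.mul_rpow (sq_nonneg R) hI0]
        congr 1
        rw [← Real.rpow_natCast R 2, ← Real.rpow_mul hR0]
        norm_num
    _ = 4 * Real.sqrt π * (δφ / δs) * nImg f := by
        rw [hR, nImg, hI]

end
end
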